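/- arXiv:1305.2155 — 13 statements merged into one kernel-verified Lean document; each statement's English description precedes it below -/
import Mathlib

section
/- If a set C with |C| ≥ 3 admits m pairwise distinct pairs of witnesses (pairs disjoint from C, each pair witnessing all elements of C via a ternary relation R, with no two distinct witness-pairs sharing a generating relation), and the ambient finite R-structure B containing C and all witnesses satisfies d₀(X) = |X| − r(X) ≥ 0 for every subset X of B, then m·(|C| − 2) ≤ |C|. -/
variable {α : Type*} [DecidableEq α]

/-- `R` is a symmetric, irreflexive ternary relation (invariant under permutations of
the arguments, holding only on triples of pairwise distinct elements). -/
def SymIrr (R : α → α → α → Prop) : Prop :=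
  (∀ x y z, R x y z → R y x z) ∧ (∀ x y z, R x y z → R x z y) ∧
  (∀ x y z, R x y z → x ≠ y ∧ x ≠ z ∧ y ≠ z)

/-- `r(X)`: the number of three-element subsets `{x,y,z}` of `X` with `R x y z`. -/
noncomputable def rCount (R : α → α → α → Prop) (X : Finset α) : ℕ :=
  {s : Finset α | s ⊆ X ∧ ∃ x y z : α, x ≠ y ∧ x ≠ z ∧ y ≠ z ∧ s = {x, y, z} ∧ R x y z}.ncard

/-- The predimension `d₀(X) = |X| - r(X)`. -/
noncomputable def d0 (R : α → α → α → Prop) (X : Finset α) : ℤ :=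
  (X.card : ℤ) - (rCount R X : ℤ)

/-- if `C ⊆ B` with `|C| ≥ 3` admits `m` pairwise distinct witness pairs
(each a 2-element set disjoint from `C`, contained in `B`, witnessing all of `C`, and
no two distinct witness pairs sharing a generating relation), and every subset of the
finite `R`-structure `B` has nonnegative predimension, then `m·(|C|-2) ≤ |C|`. -/
theorem stmt0 (R : α → α → α → Prop) (hR : SymIrr R)
    (B C : Finset α) (hCB : C ⊆ B) (hC : 3 ≤ C.card)
    (hd : ∀ X : Finset α, X ⊆ B → 0 ≤ d0 R X)
    (m : ℕ) (W : Finset (Finset α)) (hm : W.card = m)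
    (hW : ∀ w ∈ W, w.card = 2 ∧ Disjoint w C ∧ w ⊆ B ∧
      ∀ c ∈ C, ∀ x ∈ w, ∀ y ∈ w, x ≠ y → R c x y)
    (hshare : ∀ w1 ∈ W, ∀ w2 ∈ W, w1 ≠ w2 →
      ∀ c1 ∈ C, ∀ c2 ∈ C, insert c1 w1 ≠ insert c2 w2) :
    m * (C.card - 2) ≤ C.card := by
  classical
  set X : Finset α := C ∪ W.biUnion id with hX
  have hXB : X ⊆ B := by
    apply Finset.union_subset hCB
    intro x hx
    rcases Finset.mem_biUnion.1 hx with ⟨w, hw, hxw⟩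
    exact (hW w hw).2.2.1 hxw
  -- cardinality bound for X
  have hcardX : X.card ≤ C.card + 2 * m := by
    calc X.card ≤ C.card + (W.biUnion id).card := Finset.card_union_le _ _
    _ ≤ C.card + ∑ w ∈ W, (id w).card := by
        exact Nat.add_le_add_left (Finset.card_biUnion_le) _
    _ = C.card + 2 * m := by
        have : ∑ w ∈ W, (id w).card = ∑ w ∈ W, 2 :=
          Finset.sum_congr rfl (fun w hw => (hW w hw).1)
        rw [this, Finset.sum_const, smul_eq_mul, ← hm]
        ring
  -- the set of generating triples
  set T : Finset (Finset α) := (C ×ˢ W).image (fun p => insert p.1 p.2) with hT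
  have hTcard : T.card = C.card * m := by
    rw [hT, Finset.card_image_of_injOn, Finset.card_product, hm]
    intro p hp q hq hpq
    simp only [Finset.mem_coe, Finset.mem_product] at hp hq
    have hpq' : insert p.1 p.2 = insert q.1 q.2 := hpq
    by_cases hw : p.2 = q.2
    · have hp1 : p.1 ∈ insert q.1 q.2 := by
        rw [← hpq', hw]; exact Finset.mem_insert_self _ _
      rcases Finset.mem_insert.1 hp1 with h | h
      · exact Prod.ext h hw
      · exact absurd h (Finset.disjoint_left.1 (hW q.2 hq.2).2.1.symm hp.1)
    · exact absurd hpq (hshare p.2 hp.2 q.2 hq.2 hw p.1 hp.1 q.1 hq.1)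
  -- T injects into the set counted by rCount
  set S : Set (Finset α) :=
    {s : Finset α | s ⊆ X ∧ ∃ x y z : α, x ≠ y ∧ x ≠ z ∧ y ≠ z ∧ s = {x, y, z} ∧ R x y z}
    with hS
  have hTS : (↑T : Set (Finset α)) ⊆ S := by
    intro s hs
    simp only [hT, Finset.coe_image, Set.mem_image, Finset.mem_coe,
      Finset.mem_product] at hs
    rcases hs with ⟨⟨c, w⟩, ⟨hc, hw⟩, rfl⟩
    obtain ⟨b1, b2, hb12, rfl⟩ := Finset.card_eq_two.1 (hW _ hw).1
    have hb1 : b1 ∈ ({b1, b2} : Finset α) := by simp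
    have hb2 : b2 ∈ ({b1, b2} : Finset α) := by simp
    have hR1 : R c b1 b2 := (hW _ hw).2.2.2 c hc b1 hb1 b2 hb2 hb12
    have hcb1 : c ≠ b1 := fun h =>
      Finset.disjoint_left.1 (hW _ hw).2.1 hb1 (h ▸ hc)
    have hcb2 : c ≠ b2 := fun h =>
      Finset.disjoint_left.1 (hW _ hw).2.1 hb2 (h ▸ hc)
    refine ⟨?_, c, b1, b2, hcb1, hcb2, hb12, rfl, hR1⟩
    intro x hx
    rcases Finset.mem_insert.1 hx with rfl | hx
    · exact Finset.mem_union_left _ hc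
    · exact Finset.mem_union_right _ (Finset.mem_biUnion.2 ⟨_, hw, hx⟩)
  have hSfin : S.Finite := by
    apply Set.Finite.subset (X.powerset : Finset (Finset α)).finite_toSet
    intro s hs
    simpa [Finset.mem_powerset] using hs.1
  have hrC : C.card * m ≤ rCount R X := by
    rw [← hTcard, rCount, ← Set.ncard_coe_finset]
    exact Set.ncard_le_ncard hTS hSfin
  have hd0 := hd X hXB
  rw [d0] at hd0
  have hr : (rCount R X : ℤ) ≤ X.card := by linarith
  have key : C.card * m ≤ C.card + 2 * m := by
    have := hrC.trans (by exact_mod_cast hr : rCount R X ≤ X.card)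
    exact this.trans hcardX
  have heq : m * (C.card - 2) + m * 2 = m * C.card := by
    rw [← Nat.mul_add, Nat.sub_add_cancel (by omega)]
  nlinarith [key, heq]
end

section
/- Consequently, if every subset of the ambient structure has nonnegative predimension, then: a clique C with |C| > 4 has multiplicity at most 1; with |C| = 4, multiplicity at most 2; with |C| = 3, multiplicity at most 3. Equivalently, m(C) ≤ 1 + 2/(|C| − 2) for |C| ≥ 3. -/
variable {α : Type*} [DecidableEq α]

/-- The multiplicity `m(C)` of `C` inside the ambient structure `B`: the number of
distinct pairs `{b₁,b₂} ⊆ B` disjoint from `C` with `R c b₁ b₂` for all `c ∈ C`. -/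
noncomputable def mult (R : α → α → α → Prop) (B C : Finset α) : ℕ :=
  {w : Finset α | w.card = 2 ∧ w ⊆ B ∧ Disjoint w C ∧
    ∀ c ∈ C, ∀ x ∈ w, ∀ y ∈ w, x ≠ y → R c x y}.ncard

/-- if every subset of the ambient structure has nonnegative predimension,
then a clique `C` with `|C| > 4` has multiplicity at most 1, with `|C| = 4` at most 2,
and with `|C| = 3` at most 3; equivalently `m(C)·(|C|-2) ≤ |C|` for `|C| ≥ 3`. -/
theorem stmt1 (R : α → α → α → Prop) (hR : SymIrr R)
    (B C : Finset α) (hCB : C ⊆ B)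
    (hd : ∀ X : Finset α, X ⊆ B → 0 ≤ d0 R X) :
    (4 < C.card → mult R B C ≤ 1) ∧
    (C.card = 4 → mult R B C ≤ 2) ∧
    (C.card = 3 → mult R B C ≤ 3) ∧
    (3 ≤ C.card → mult R B C * (C.card - 2) ≤ C.card) := by
  classical
  have key : mult R B C * C.card ≤ C.card + 2 * mult R B C := by
    have hWfin : {w : Finset α | w.card = 2 ∧ w ⊆ B ∧ Disjoint w C ∧
        ∀ c ∈ C, ∀ x ∈ w, ∀ y ∈ w, x ≠ y → R c x y}.Finite := by
      apply Set.Finite.subset (B.powerset : Finset (Finset α)).finite_toSet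
      intro w hw
      simp only [Finset.coe_powerset, Set.mem_preimage, Set.mem_powerset_iff,
        Finset.coe_subset]
      exact hw.2.1
    set Wf := hWfin.toFinset with hWf
    have hWmem : ∀ w, w ∈ Wf ↔ (w.card = 2 ∧ w ⊆ B ∧ Disjoint w C ∧
        ∀ c ∈ C, ∀ x ∈ w, ∀ y ∈ w, x ≠ y → R c x y) := fun w => hWfin.mem_toFinset
    have hmult : mult R B C = Wf.card := by
      rw [mult, ← Set.ncard_coe_finset, Set.Finite.coe_toFinset]
    set X := C ∪ Wf.biUnion id with hX
    have hXB : X ⊆ B := by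
      intro a ha
      rcases Finset.mem_union.mp ha with h | h
      · exact hCB h
      · rcases Finset.mem_biUnion.mp h with ⟨w, hw, haw⟩
        exact ((hWmem w).mp hw).2.1 haw
    have hXcard : X.card ≤ C.card + 2 * Wf.card := by
      calc X.card ≤ C.card + (Wf.biUnion id).card := Finset.card_union_le _ _
        _ ≤ C.card + ∑ w ∈ Wf, (id w).card := by
            gcongr
            exact Finset.card_biUnion_le
        _ = C.card + 2 * Wf.card := by
            congr 1
            simp only [id_eq]
            rw [Finset.sum_congr rfl (fun w hw => ((hWmem w).mp hw).1),
              Finset.sum_const, smul_eq_mul, mul_comm]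
    have hTfin : {s : Finset α | s ⊆ X ∧ ∃ x y z : α, x ≠ y ∧ x ≠ z ∧ y ≠ z ∧
        s = {x, y, z} ∧ R x y z}.Finite := by
      apply Set.Finite.subset (X.powerset : Finset (Finset α)).finite_toSet
      intro s hs
      simp only [Finset.coe_powerset, Set.mem_preimage, Set.mem_powerset_iff,
        Finset.coe_subset]
      exact hs.1
    have hr : rCount R X = hTfin.toFinset.card := by
      rw [rCount, ← Set.ncard_coe_finset, Set.Finite.coe_toFinset]
    -- the injection (w, c) ↦ insert c w
    have hinj : ∀ p ∈ Wf ×ˢ C, ∀ q ∈ Wf ×ˢ C,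
        (insert p.2 p.1 : Finset α) = insert q.2 q.1 → p = q := by
      rintro ⟨w, c⟩ hp ⟨w', c'⟩ hq hins
      simp only [Finset.mem_product] at hp hq
      obtain ⟨hw, hc⟩ := hp
      obtain ⟨hw', hc'⟩ := hq
      have hdw : Disjoint w C := ((hWmem w).mp hw).2.2.1
      have hdw' : Disjoint w' C := ((hWmem w').mp hw').2.2.1
      have hsub : ∀ (u : Finset α) (a : α), Disjoint u C → a ∈ C →
          u = (insert a u) \ C := by
        intro u a hdu haC
        ext b
        simp only [Finset.mem_sdiff, Finset.mem_insert]
        constructor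
        · intro hb
          exact ⟨Or.inr hb, fun hbC => (Finset.disjoint_left.mp hdu hb) hbC⟩
        · rintro ⟨hb | hb, hbC⟩
          · exact absurd (hb ▸ haC) hbC
          · exact hb
      have hww' : w = w' := by
        rw [hsub w c hdw hc, hins, ← hsub w' c' hdw' hc']
      have hcc' : c = c' := by
        have : c ∈ insert c' w' := hins ▸ Finset.mem_insert_self c w
        rcases Finset.mem_insert.mp this with h | h
        · exact h
        · exact absurd hc (Finset.disjoint_left.mp hdw' h)
      simp [hww', hcc']
    have himg : (Wf ×ˢ C).image (fun p => insert p.2 p.1) ⊆ hTfin.toFinset := by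
      intro s hs
      rcases Finset.mem_image.mp hs with ⟨⟨w, c⟩, hp, rfl⟩
      simp only [Finset.mem_product] at hp
      obtain ⟨hw, hc⟩ := hp
      obtain ⟨hw2, hwB, hdw, hRw⟩ := (hWmem w).mp hw
      obtain ⟨b1, b2, hb12, hwpair⟩ := Finset.card_eq_two.mp hw2
      rw [Set.Finite.mem_toFinset]
      refine ⟨?_, c, b1, b2, ?_, ?_, hb12, ?_, ?_⟩
      · intro a ha
        rcases Finset.mem_insert.mp ha with h | h
        · exact Finset.mem_union_left _ (h ▸ hc)
        · exact Finset.mem_union_right _ (Finset.mem_biUnion.mpr ⟨w, hw, h⟩)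
      · intro h
        exact (Finset.disjoint_left.mp hdw (hwpair ▸ Finset.mem_insert_self b1 {b2})) (h ▸ hc)
      · intro h
        exact (Finset.disjoint_left.mp hdw
          (hwpair ▸ Finset.mem_insert_of_mem (Finset.mem_singleton_self b2))) (h ▸ hc)
      · rw [hwpair]
      · exact hRw c hc b1 (hwpair ▸ Finset.mem_insert_self b1 {b2}) b2
          (hwpair ▸ Finset.mem_insert_of_mem (Finset.mem_singleton_self b2)) hb12
    have hcount : Wf.card * C.card ≤ hTfin.toFinset.card := by
      calc Wf.card * C.card = (Wf ×ˢ C).card := (Finset.card_product _ _).symm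
        _ = ((Wf ×ˢ C).image (fun p => insert p.2 p.1)).card :=
            (Finset.card_image_of_injOn hinj).symm
        _ ≤ _ := Finset.card_le_card himg
    have hd0 := hd X hXB
    rw [d0] at hd0
    have hrX : rCount R X ≤ X.card := by exact_mod_cast (by linarith : (rCount R X : ℤ) ≤ X.card)
    rw [hmult]
    calc Wf.card * C.card ≤ hTfin.toFinset.card := hcount
      _ = rCount R X := hr.symm
      _ ≤ X.card := hrX
      _ ≤ C.card + 2 * Wf.card := hXcard
  have hlast : 3 ≤ C.card → mult R B C * (C.card - 2) ≤ C.card := by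
    intro h3
    obtain ⟨k, hk⟩ := Nat.exists_eq_add_of_le h3
    set m := mult R B C
    rw [hk] at key ⊢
    have : m * (3 + k) ≤ 3 + k + 2 * m := key
    have h1 : m * 3 + m * k ≤ 3 + k + 2 * m := by nlinarith
    have : m * (3 + k - 2) = m + m * k := by
      have : 3 + k - 2 = 1 + k := by omega
      rw [this]; ring
    omega
  refine ⟨?_, ?_, ?_, hlast⟩
  · intro h4
    by_contra hm
    push_neg at hm
    have h2m : 2 ≤ mult R B C := hm
    have h3 : 3 ≤ C.card := by omega
    have := hlast h3
    have : 2 * (C.card - 2) ≤ mult R B C * (C.card - 2) :=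
      Nat.mul_le_mul_right _ h2m
    omega
  · intro h4; rw [h4] at key; omega
  · intro h3; rw [h3] at key; omega
end

section
/- If two distinct maximal S-cliques (C₁,{x₁,y₁}) and (C₂,{x₂,y₂}) in an R-structure share a generating relation r, then their witness pairs intersect in exactly one point x, the shared relation equals {x,y₁,y₂} (the union of the two witness pairs), it is the unique shared relation, and moreover y₂ ∈ C₁ and y₁ ∈ C₂. -/
variable {α : Type*} [DecidableEq α]

/-- `(C, {x,y})` is an S-clique: `|C| ≥ 3`, the witnesses are distinct and
outside `C`, and `R c x y` for all `c ∈ C`. -/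
def IsCliqueW (R : α → α → α → Prop) (C : Finset α) (x y : α) : Prop :=
  3 ≤ C.card ∧ x ≠ y ∧ x ∉ C ∧ y ∉ C ∧ ∀ c ∈ C, R c x y

/-- `(C, {x,y})` is a maximal S-clique in `A`: additionally `C ⊆ A` and no element of
`A \ (C ∪ {x,y})` is `R`-related to the witness pair. -/
def IsMaxCliqueIn (R : α → α → α → Prop) (A : Set α) (C : Finset α) (x y : α) : Prop :=
  IsCliqueW R C x y ∧ ↑C ⊆ A ∧ ∀ a ∈ A, a ∉ C → a ≠ x → a ≠ y → ¬ R a x y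

lemma cliqueW_swap {R : α → α → α → Prop} (hR : SymIrr R) {C : Finset α} {x y : α}
    (h : IsCliqueW R C x y) : IsCliqueW R C y x :=
  ⟨h.1, h.2.1.symm, h.2.2.2.1, h.2.2.1, fun c hc => hR.2.1 _ _ _ (h.2.2.2.2 c hc)⟩

lemma maxClique_swap {R : α → α → α → Prop} (hR : SymIrr R) {A : Set α} {C : Finset α}
    {x y : α} (h : IsMaxCliqueIn R A C x y) : IsMaxCliqueIn R A C y x :=
  ⟨cliqueW_swap hR h.1, h.2.1,
    fun a ha haC hax hay hRa => h.2.2 a ha haC hay hax (hR.2.1 _ _ _ hRa)⟩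

lemma subset_of_pair_eq {R : α → α → α → Prop} (hR : SymIrr R) {A : Set α}
    {C1 C2 : Finset α} {x1 y1 x2 y2 : α}
    (h1 : IsMaxCliqueIn R A C1 x1 y1) (h2 : IsMaxCliqueIn R A C2 x2 y2)
    (hp : ({x1, y1} : Finset α) = {x2, y2}) : C1 ⊆ C2 := by
  obtain ⟨⟨_, hxy1, hx1, hy1, hall1⟩, hsub1, _⟩ := h1
  obtain ⟨⟨_, hxy2, hx2, hy2, _⟩, _, hmax2⟩ := h2
  have hx2m : x2 = x1 ∨ x2 = y1 := by
    have : x2 ∈ ({x1, y1} : Finset α) := hp ▸ (by simp)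
    simpa using this
  have hy2m : y2 = x1 ∨ y2 = y1 := by
    have : y2 ∈ ({x1, y1} : Finset α) := hp ▸ (by simp)
    simpa using this
  intro a ha
  by_contra haC2
  have hax1 : a ≠ x1 := fun h => hx1 (h ▸ ha)
  have hay1 : a ≠ y1 := fun h => hy1 (h ▸ ha)
  have hRa : R a x2 y2 := by
    rcases hx2m with h' | h' <;> rcases hy2m with h'' | h''
    · exact absurd (h'' ▸ h') hxy2
    · exact h' ▸ h'' ▸ hall1 a ha
    · exact h' ▸ h'' ▸ hR.2.1 _ _ _ (hall1 a ha)
    · exact absurd (h'' ▸ h') hxy2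
  exact hmax2 a (hsub1 ha) haC2
    (by rcases hx2m with h'' | h'' <;> simp_all)
    (by rcases hy2m with h'' | h'' <;> simp_all) hRa

lemma core_case {R : α → α → α → Prop} (hR : SymIrr R) {C1 C2 : Finset α} {x y1 y2 : α}
    (h1 : IsCliqueW R C1 x y1) (h2 : IsCliqueW R C2 x y2) (hy : y1 ≠ y2)
    {c1 c2 : α} (hc1 : c1 ∈ C1) (hc2 : c2 ∈ C2)
    (hr : insert c1 ({x, y1} : Finset α) = insert c2 ({x, y2} : Finset α)) :
    ∃ x' ya yb : α,
      ({x, y1} : Finset α) = {x', ya} ∧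
      ({x, y2} : Finset α) = {x', yb} ∧
      ya ≠ yb ∧
      ({x, y1} : Finset α) ∩ ({x, y2} : Finset α) = {x'} ∧
      insert c1 ({x, y1} : Finset α) = {x', ya, yb} ∧
      yb ∈ C1 ∧ ya ∈ C2 ∧
      (∀ c1' ∈ C1, ∀ c2' ∈ C2,
        insert c1' ({x, y1} : Finset α) = insert c2' ({x, y2} : Finset α) →
        insert c1' ({x, y1} : Finset α) = ({x', ya, yb} : Finset α)) := by
  obtain ⟨_, hxy1, hx1, hy1n, _⟩ := h1
  obtain ⟨_, hxy2, hx2, hy2n, _⟩ := h2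
  have key : ∀ c1' ∈ C1, ∀ c2' ∈ C2,
      insert c1' ({x, y1} : Finset α) = insert c2' ({x, y2} : Finset α) →
      c1' = y2 ∧ c2' = y1 := by
    intro c1' hc1' c2' hc2' hr'
    have hy2m : y2 = c1' ∨ y2 = x ∨ y2 = y1 := by
      have : y2 ∈ insert c1' ({x, y1} : Finset α) := hr' ▸ (by simp)
      simpa using this
    have hy1m : y1 = c2' ∨ y1 = x ∨ y1 = y2 := by
      have : y1 ∈ insert c2' ({x, y2} : Finset α) := hr' ▸ (by simp)
      simpa using this
    constructor
    · rcases hy2m with h | h | h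
      · exact h.symm
      · exact absurd h.symm hxy2
      · exact absurd h.symm hy
    · rcases hy1m with h | h | h
      · exact h.symm
      · exact absurd h.symm hxy1
      · exact absurd h hy
  obtain ⟨hc1y2, hc2y1⟩ := key c1 hc1 c2 hc2 hr
  refine ⟨x, y1, y2, rfl, rfl, hy, ?_, ?_, hc1y2 ▸ hc1, hc2y1 ▸ hc2, ?_⟩
  · ext a
    simp only [Finset.mem_inter, Finset.mem_insert, Finset.mem_singleton]
    constructor
    · rintro ⟨h | h, h' | h'⟩ <;> first | assumption | (exfalso; exact hy (h.symm.trans h'))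
    · rintro rfl; exact ⟨Or.inl rfl, Or.inl rfl⟩
  · subst hc1y2; ext a
    simp only [Finset.mem_insert, Finset.mem_singleton]; tauto
  · intro c1' hc1' c2' hc2' hr'
    obtain ⟨h, _⟩ := key c1' hc1' c2' hc2' hr'
    subst h; ext a
    simp only [Finset.mem_insert, Finset.mem_singleton]; tauto

/-- if two distinct maximal S-cliques `(C₁,{x₁,y₁})`, `(C₂,{x₂,y₂})`
share a generating relation, then their witness pairs intersect in exactly one point
`x`, the shared relation is `{x, y₁', y₂'}` (the union of the two witness pairs),
it is the unique shared relation, and `y₂' ∈ C₁`, `y₁' ∈ C₂`. -/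
theorem stmt2 (R : α → α → α → Prop) (hR : SymIrr R) (A : Set α)
    (C1 C2 : Finset α) (x1 y1 x2 y2 : α)
    (h1 : IsMaxCliqueIn R A C1 x1 y1) (h2 : IsMaxCliqueIn R A C2 x2 y2)
    (hdist : ¬ (C1 = C2 ∧ ({x1, y1} : Finset α) = {x2, y2}))
    (c1 : α) (hc1 : c1 ∈ C1) (c2 : α) (hc2 : c2 ∈ C2)
    (hr : insert c1 ({x1, y1} : Finset α) = insert c2 ({x2, y2} : Finset α)) :
    ∃ x ya yb : α,
      ({x1, y1} : Finset α) = {x, ya} ∧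
      ({x2, y2} : Finset α) = {x, yb} ∧
      ya ≠ yb ∧
      ({x1, y1} : Finset α) ∩ ({x2, y2} : Finset α) = {x} ∧
      insert c1 ({x1, y1} : Finset α) = {x, ya, yb} ∧
      yb ∈ C1 ∧ ya ∈ C2 ∧
      (∀ c1' ∈ C1, ∀ c2' ∈ C2,
        insert c1' ({x1, y1} : Finset α) = insert c2' ({x2, y2} : Finset α) →
        insert c1' ({x1, y1} : Finset α) = ({x, ya, yb} : Finset α)) := by
  have hpairne : ({x1, y1} : Finset α) ≠ {x2, y2} := by
    intro hp
    exact hdist ⟨le_antisymm (subset_of_pair_eq hR h1 h2 hp)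
      (subset_of_pair_eq hR h2 h1 hp.symm), hp⟩
  obtain ⟨⟨_, hxy1, hx1, hy1n, _⟩, _, _⟩ := id h1
  obtain ⟨⟨_, hxy2, hx2, hy2n, _⟩, _, _⟩ := id h2
  have hx2m : x2 = c1 ∨ x2 = x1 ∨ x2 = y1 := by
    have : x2 ∈ insert c1 ({x1, y1} : Finset α) := hr ▸ (by simp)
    simpa using this
  have hy2m : y2 = c1 ∨ y2 = x1 ∨ y2 = y1 := by
    have : y2 ∈ insert c1 ({x1, y1} : Finset α) := hr ▸ (by simp)
    simpa using this
  rcases hx2m with hx2e | hx2e | hx2e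
  · -- x2 = c1, so the shared point is y2
    rcases hy2m with hy2e | hy2e | hy2e
    · exact absurd (hx2e.trans hy2e.symm) hxy2
    · -- y2 = x1 : shared point is that common value
      subst hy2e
      rw [Finset.pair_comm x2 y2] at hr ⊢
      refine core_case hR h1.1 (cliqueW_swap hR h2.1) ?_ hc1 hc2 hr
      intro h; subst h
      exact hpairne (Finset.pair_comm _ _)
    · -- y2 = y1
      subst hy2e
      rw [Finset.pair_comm x1 y2, Finset.pair_comm x2 y2] at hr ⊢
      refine core_case hR (cliqueW_swap hR h1.1) (cliqueW_swap hR h2.1) ?_ hc1 hc2 hr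
      intro h; subst h
      exact hpairne rfl
  · -- x2 = x1
    subst hx2e
    refine core_case hR h1.1 h2.1 ?_ hc1 hc2 hr
    intro h; subst h; exact hpairne rfl
  · -- x2 = y1
    subst hx2e
    rw [Finset.pair_comm x1 x2] at hr ⊢
    refine core_case hR (cliqueW_swap hR h1.1) h2.1 ?_ hc1 hc2 hr
    intro h; subst h
    exact hpairne (Finset.pair_comm _ _)
end

section
/- Let A ⊆ N be R-structures and let C be the universe of a clique in N witnessed externally by a pair {b₁,b₂} (both witnesses outside A ∪ C). Then d₀(b₁,b₂/A) ≤ 2 − |C|; if exactly one witness is outside A, then d₀(b₁,b₂/A) ≤ 1 − |C|. -/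
variable {α : Type*} [DecidableEq α]

lemma tripleSet_finite (R : α → α → α → Prop) (X : Finset α) :
    {s : Finset α | s ⊆ X ∧ ∃ x y z : α, x ≠ y ∧ x ≠ z ∧ y ≠ z ∧ s = {x, y, z} ∧ R x y z}.Finite :=
  Set.Finite.subset (X.powerset : Finset (Finset α)).finite_toSet
    (fun s hs => by simpa [Finset.mem_powerset] using hs.1)

lemma rCount_key (R : α → α → α → Prop)
    (A C : Finset α) (hCA : C ⊆ A)
    (b1 b2 : α) (hne : b1 ≠ b2) (hb1 : b1 ∉ C) (hb2 : b2 ∉ C)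
    (hw : ∀ c ∈ C, R c b1 b2) (hout : b1 ∉ A ∨ b2 ∉ A) :
    rCount R A + C.card ≤ rCount R (A ∪ {b1, b2}) := by
  classical
  set S : Set (Finset α) :=
    {s : Finset α | s ⊆ A ∧ ∃ x y z : α, x ≠ y ∧ x ≠ z ∧ y ≠ z ∧ s = {x, y, z} ∧ R x y z}
  set T : Set (Finset α) :=
    {s : Finset α | s ⊆ A ∪ {b1, b2} ∧
      ∃ x y z : α, x ≠ y ∧ x ≠ z ∧ y ≠ z ∧ s = {x, y, z} ∧ R x y z}
  set D : Set (Finset α) := (fun c => ({c, b1, b2} : Finset α)) '' (C : Set α)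
  have hTfin : T.Finite := tripleSet_finite R (A ∪ {b1, b2})
  have hSsub : S ⊆ T := fun s hs => ⟨hs.1.trans Finset.subset_union_left, hs.2⟩
  have hDsub : D ⊆ T := by
    rintro _ ⟨c, hc, rfl⟩
    have hc' : (c : α) ∈ C := hc
    have hcb1 : c ≠ b1 := fun h => hb1 (h ▸ hc')
    have hcb2 : c ≠ b2 := fun h => hb2 (h ▸ hc')
    refine ⟨?_, c, b1, b2, hcb1, hcb2, hne, rfl, hw c hc'⟩
    intro x hx
    simp only [Finset.mem_insert, Finset.mem_singleton] at hx
    rcases hx with rfl | rfl | rfl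
    · exact Finset.mem_union_left _ (hCA hc')
    · exact Finset.mem_union_right _ (by simp)
    · exact Finset.mem_union_right _ (by simp)
  have hdisj : Disjoint S D := by
    rw [Set.disjoint_left]
    rintro s hs ⟨c, hc, rfl⟩
    rcases hout with h | h
    · exact h (hs.1 (by simp))
    · exact h (hs.1 (by simp))
  have hDcard : D.ncard = C.card := by
    rw [Set.ncard_image_of_injOn, Set.ncard_coe_finset]
    intro c hc c' hc' h
    have hcb1 : c ≠ b1 := fun he => hb1 (he ▸ hc)
    have hcb2 : c ≠ b2 := fun he => hb2 (he ▸ hc)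
    have h' : ({c, b1, b2} : Finset α) = {c', b1, b2} := h
    have : c ∈ ({c', b1, b2} : Finset α) := h' ▸ (by simp : c ∈ ({c, b1, b2} : Finset α))
    simp only [Finset.mem_insert, Finset.mem_singleton] at this
    tauto
  have hUnion : (S ∪ D).ncard = S.ncard + D.ncard :=
    Set.ncard_union_eq hdisj (hTfin.subset hSsub) (hTfin.subset hDsub)
  have hle : (S ∪ D).ncard ≤ T.ncard :=
    Set.ncard_le_ncard (Set.union_subset hSsub hDsub) hTfin
  have : rCount R A = S.ncard := rfl
  have hT : rCount R (A ∪ {b1, b2}) = T.ncard := rfl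
  omega

/-- if `C ⊆ A` is the universe of a clique witnessed by `{b₁,b₂}` with both
witnesses outside `A`, then `d₀(b₁,b₂/A) ≤ 2 - |C|`; if exactly one witness is outside
`A`, then `d₀(b₁,b₂/A) ≤ 1 - |C|`. -/
theorem stmt3 (R : α → α → α → Prop) (hR : SymIrr R)
    (A C : Finset α) (hCA : C ⊆ A)
    (b1 b2 : α) (hne : b1 ≠ b2) (hb1 : b1 ∉ C) (hb2 : b2 ∉ C)
    (hw : ∀ c ∈ C, R c b1 b2) :
    (b1 ∉ A → b2 ∉ A →
      d0 R (A ∪ {b1, b2}) - d0 R A ≤ 2 - (C.card : ℤ)) ∧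
    ((b1 ∉ A ∧ b2 ∈ A) ∨ (b1 ∈ A ∧ b2 ∉ A) →
      d0 R (A ∪ {b1, b2}) - d0 R A ≤ 1 - (C.card : ℤ)) := by
  constructor
  · intro h1 h2
    have hkey := rCount_key R A C hCA b1 b2 hne hb1 hb2 hw (Or.inl h1)
    have hcard : (A ∪ {b1, b2}).card ≤ A.card + 2 := by
      calc (A ∪ {b1, b2}).card ≤ A.card + ({b1, b2} : Finset α).card :=
            Finset.card_union_le _ _
        _ ≤ A.card + 2 := by
            have := Finset.card_insert_le b1 ({b2} : Finset α)
            simp only [Finset.card_singleton] at this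
            omega
    simp only [d0]
    push_cast
    have hc2 : (A ∪ {b1, b2}).card ≤ A.card + 2 := hcard
    have : (((A ∪ {b1, b2}).card : ℤ)) ≤ (A.card : ℤ) + 2 := by exact_mod_cast hc2
    have hk : (rCount R A : ℤ) + (C.card : ℤ) ≤ (rCount R (A ∪ {b1, b2}) : ℤ) := by
      exact_mod_cast hkey
    linarith
  · intro hcase
    have hout : b1 ∉ A ∨ b2 ∉ A := by tauto
    have hkey := rCount_key R A C hCA b1 b2 hne hb1 hb2 hw hout
    have hcard : (A ∪ {b1, b2}).card ≤ A.card + 1 := by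
      rcases hcase with ⟨h1, h2⟩ | ⟨h1, h2⟩
      · have : A ∪ {b1, b2} = insert b1 A := by
          ext x
          simp only [Finset.mem_union, Finset.mem_insert, Finset.mem_singleton]
          constructor
          · rintro (h | rfl | rfl) <;> tauto
          · rintro (rfl | h) <;> tauto
        rw [this]
        exact Finset.card_insert_le _ _
      · have : A ∪ {b1, b2} = insert b2 A := by
          ext x
          simp only [Finset.mem_union, Finset.mem_insert, Finset.mem_singleton]
          constructor
          · rintro (h | rfl | rfl) <;> tauto
          · rintro (rfl | h) <;> tauto
        rw [this]
        exact Finset.card_insert_le _ _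
    simp only [d0]
    have : (((A ∪ {b1, b2}).card : ℤ)) ≤ (A.card : ℤ) + 1 := by exact_mod_cast hcard
    have hk : (rCount R A : ℤ) + (C.card : ℤ) ≤ (rCount R (A ∪ {b1, b2}) : ℤ) := by
      exact_mod_cast hkey
    linarith
end

section
/- Let N be an S-structure and B₁, B₂ ⊆ N finite substructures with A = B₁ ∩ B₂ and D = B₁ ∪ B₂. Then d₀ₛ(B₂/A) ≥ d₀ₛ(B₂/B₁) (submodularity of the S-predimension). Moreover, if every maximal clique of D not extending a clique of A lies entirely within B₁ or entirely within B₂ (i.e. C(D/A) = C(B₁/A) ∪ C(B₂/A)), then equality holds. -/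
variable {α : Type*} [DecidableEq α] {β : Type*} [DecidableEq β]

/-- `|X|* = max(0, |X| - 2)`. -/
def cardStar (X : Finset α) : ℤ := max 0 ((X.card : ℤ) - 2)

/-- An S-structure: a carrier set together with a pre-multiplicity function `pm` on
finite sets (its support being the set of declared maximal cliques, each a subset of the
carrier of size `≥ 3`, with pre-multiplicity at most 3), such that every finite set meets
only finitely many cliques in `≥ 3` points, and the associated multiplicity function
`m(D) = Σ_{D ⊆ C} pm C` satisfies the validity bound `m(D)·(|D|-2) ≤ |D|`. -/
structure SStruct (α : Type*) [DecidableEq α] where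
  carrier : Set α
  pm : Finset α → ℕ
  pm_le : ∀ C, pm C ≤ 3
  pm_supp : ∀ C, pm C ≠ 0 → ↑C ⊆ carrier ∧ 3 ≤ C.card
  finite_meets : ∀ X : Finset α, {C : Finset α | pm C ≠ 0 ∧ 3 ≤ (C ∩ X).card}.Finite
  valid : ∀ D : Finset α, 3 ≤ D.card →
    (∑ᶠ C ∈ {C : Finset α | D ⊆ C}, pm C) * (D.card - 2) ≤ D.card

/-- The S-predimension of a finite subset `X` of the ambient S-structure `N`:
`d₀ₛ(X) = |X| - Σ_C pm(C)·|C ∩ X|*` (the induced cliques on `X` are the `C ∩ X`). -/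
noncomputable def d0s (N : SStruct α) (X : Finset α) : ℤ :=
  (X.card : ℤ) - ∑ᶠ C : Finset α, (N.pm C : ℤ) * cardStar (C ∩ X)

/-- A finite subset `A` is strong (self-sufficient) in `B`: `d₀ₛ(X/A) ≥ 0` for every
finite `X ⊆ B`. -/
def FinStrongIn (N : SStruct α) (A : Finset α) (B : Set α) : Prop :=
  ↑A ⊆ B ∧ ∀ X : Finset α, ↑X ⊆ B → d0s N A ≤ d0s N (X ∪ A)

/-- `A ≤ₛ B` for arbitrary (possibly infinite) subsets `A ⊆ B` of the ambient
S-structure `N`: every finite `D ⊆ A` strong in `A` is strong in `B`. -/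
def StrongIn (N : SStruct α) (A B : Set α) : Prop :=
  A ⊆ B ∧ ∀ D : Finset α, ↑D ⊆ A → FinStrongIn N D A → FinStrongIn N D B

/-- The associated multiplicity function: `m(X) = Σ_{X ⊆ C} pm C`. -/
noncomputable def multFun (N : SStruct α) (X : Finset α) : ℕ :=
  ∑ᶠ C ∈ {C : Finset α | X ⊆ C}, N.pm C

/-- submodularity of the S-predimension. For finite substructures
`B₁, B₂` of `N` with `A = B₁ ∩ B₂` and `D = B₁ ∪ B₂`: `d₀ₛ(B₂/A) ≥ d₀ₛ(B₂/B₁)`;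
moreover, if every maximal clique of `D` not extending a clique of `A` lies entirely
within `B₁` or within `B₂` (i.e. `C(D/A) = C(B₁/A) ∪ C(B₂/A)`), equality holds. -/
theorem stmt5 (N : SStruct α) (B1 B2 : Finset α)
    (h1 : ↑B1 ⊆ N.carrier) (h2 : ↑B2 ⊆ N.carrier) :
    (d0s N (B1 ∪ B2) - d0s N B1 ≤ d0s N B2 - d0s N (B1 ∩ B2)) ∧
    ((∀ C : Finset α, N.pm C ≠ 0 → 3 ≤ (C ∩ (B1 ∪ B2)).card →
        (C ∩ (B1 ∩ B2)).card < 3 →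
        C ∩ (B1 ∪ B2) ⊆ B1 ∨ C ∩ (B1 ∪ B2) ⊆ B2) →
      d0s N (B1 ∪ B2) - d0s N B1 = d0s N B2 - d0s N (B1 ∩ B2)) := by
  classical
  set S := (N.finite_meets (B1 ∪ B2)).toFinset with hS
  have hsupp : ∀ X : Finset α, X ⊆ B1 ∪ B2 →
      (Function.support fun C => (N.pm C : ℤ) * cardStar (C ∩ X)) ⊆ ↑S := by
    intro X hX C hC
    simp only [Function.mem_support, mul_ne_zero_iff] at hC
    have hpm : N.pm C ≠ 0 := by
      intro h; exact hC.1 (by exact_mod_cast congrArg (Nat.cast : ℕ → ℤ) h)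
    have hcs : 3 ≤ (C ∩ X).card := by
      by_contra h
      push_neg at h
      apply hC.2
      have : ((C ∩ X).card : ℤ) - 2 ≤ 0 := by
        have : (C ∩ X).card ≤ 2 := by omega
        push_cast; omega
      simp [cardStar, max_eq_left this]
    have : 3 ≤ (C ∩ (B1 ∪ B2)).card :=
      le_trans hcs (Finset.card_le_card
        (Finset.inter_subset_inter (subset_refl C) hX))
    simp only [hS, Finset.mem_coe, Set.Finite.mem_toFinset, Set.mem_setOf_eq]
    exact ⟨hpm, this⟩
  have hd0 : ∀ X : Finset α, X ⊆ B1 ∪ B2 →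
      d0s N X = (X.card : ℤ) - ∑ C ∈ S, (N.pm C : ℤ) * cardStar (C ∩ X) := by
    intro X hX
    unfold d0s
    rw [finsum_eq_sum_of_support_subset _ (hsupp X hX)]
  have e1 := hd0 (B1 ∪ B2) (subset_refl _)
  have e2 := hd0 B1 Finset.subset_union_left
  have e3 := hd0 B2 Finset.subset_union_right
  have e4 := hd0 (B1 ∩ B2)
    (le_trans Finset.inter_subset_left Finset.subset_union_left)
  have hcard : ((B1 ∪ B2).card : ℤ) + ((B1 ∩ B2).card : ℤ)
      = (B1.card : ℤ) + (B2.card : ℤ) := by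
    have := Finset.card_union_add_card_inter B1 B2
    exact_mod_cast congrArg (Nat.cast : ℕ → ℤ) this
  -- pointwise facts for each clique C
  have hsets : ∀ C : Finset α, (C ∩ B1) ∪ (C ∩ B2) = C ∩ (B1 ∪ B2) ∧
      (C ∩ B1) ∩ (C ∩ B2) = C ∩ (B1 ∩ B2) := by
    intro C
    constructor
    · ext x; simp [Finset.mem_inter, Finset.mem_union]; tauto
    · ext x; simp [Finset.mem_inter]; tauto
  have hcards : ∀ C : Finset α,
      ((C ∩ (B1 ∪ B2)).card : ℤ) + ((C ∩ (B1 ∩ B2)).card : ℤ)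
        = ((C ∩ B1).card : ℤ) + ((C ∩ B2).card : ℤ) ∧
      (C ∩ (B1 ∩ B2)).card ≤ (C ∩ B1).card ∧
      (C ∩ (B1 ∩ B2)).card ≤ (C ∩ B2).card ∧
      (C ∩ B1).card ≤ (C ∩ (B1 ∪ B2)).card ∧
      (C ∩ B2).card ≤ (C ∩ (B1 ∪ B2)).card := by
    intro C
    obtain ⟨hu, hi⟩ := hsets C
    refine ⟨?_, ?_, ?_, ?_, ?_⟩
    · have := Finset.card_union_add_card_inter (C ∩ B1) (C ∩ B2)
      rw [hu, hi] at this
      exact_mod_cast congrArg (Nat.cast : ℕ → ℤ) this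
    all_goals
      exact Finset.card_le_card (Finset.inter_subset_inter (subset_refl C)
        (by first
          | exact Finset.inter_subset_left
          | exact Finset.inter_subset_right
          | exact Finset.subset_union_left
          | exact Finset.subset_union_right))
  have hterm_le : ∀ C ∈ S,
      (N.pm C : ℤ) * cardStar (C ∩ B1) + (N.pm C : ℤ) * cardStar (C ∩ B2)
        ≤ (N.pm C : ℤ) * cardStar (C ∩ (B1 ∪ B2))
          + (N.pm C : ℤ) * cardStar (C ∩ (B1 ∩ B2)) := by
    intro C _
    have h := hcards C
    have hpm : (0 : ℤ) ≤ (N.pm C : ℤ) := Nat.cast_nonneg _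
    have hst : cardStar (C ∩ B1) + cardStar (C ∩ B2)
        ≤ cardStar (C ∩ (B1 ∪ B2)) + cardStar (C ∩ (B1 ∩ B2)) := by
      simp only [cardStar]
      omega
    nlinarith [hst, hpm]
  have hsum_le : ∑ C ∈ S, (N.pm C : ℤ) * cardStar (C ∩ B1)
      + ∑ C ∈ S, (N.pm C : ℤ) * cardStar (C ∩ B2)
      ≤ ∑ C ∈ S, (N.pm C : ℤ) * cardStar (C ∩ (B1 ∪ B2))
      + ∑ C ∈ S, (N.pm C : ℤ) * cardStar (C ∩ (B1 ∩ B2)) := by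
    rw [← Finset.sum_add_distrib, ← Finset.sum_add_distrib]
    exact Finset.sum_le_sum hterm_le
  constructor
  · rw [e1, e2, e3, e4]; linarith
  · intro hyp
    have hterm_eq : ∀ C ∈ S,
        (N.pm C : ℤ) * cardStar (C ∩ B1) + (N.pm C : ℤ) * cardStar (C ∩ B2)
          = (N.pm C : ℤ) * cardStar (C ∩ (B1 ∪ B2))
            + (N.pm C : ℤ) * cardStar (C ∩ (B1 ∩ B2)) := by
      intro C hC
      simp only [hS, Set.Finite.mem_toFinset, Set.mem_setOf_eq] at hC
      obtain ⟨hpm, hbig⟩ := hC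
      by_cases ha : 3 ≤ (C ∩ (B1 ∩ B2)).card
      · -- all four sets have card ≥ 3, use the exact card identity
        have h := hcards C
        have hst : cardStar (C ∩ B1) + cardStar (C ∩ B2)
            = cardStar (C ∩ (B1 ∪ B2)) + cardStar (C ∩ (B1 ∩ B2)) := by
          simp only [cardStar]; omega
        rw [← mul_add, ← mul_add, hst]
      · push_neg at ha
        rcases hyp C hpm hbig ha with hc1 | hc2
        · have hCD : C ∩ (B1 ∪ B2) = C ∩ B1 :=
            subset_antisymm
              (Finset.subset_inter Finset.inter_subset_left hc1)
              (Finset.inter_subset_inter (subset_refl C) Finset.subset_union_left)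
          have hCA : C ∩ B2 = C ∩ (B1 ∩ B2) := by
            apply subset_antisymm
            · refine Finset.subset_inter Finset.inter_subset_left ?_
              refine Finset.subset_inter ?_ Finset.inter_subset_right
              intro x hx
              exact hc1 (by
                simp only [Finset.mem_inter, Finset.mem_union] at hx ⊢
                exact ⟨hx.1, Or.inr hx.2⟩)
            · exact Finset.inter_subset_inter (subset_refl C) Finset.inter_subset_right
          rw [hCD, hCA]; try ring
        · have hCD : C ∩ (B1 ∪ B2) = C ∩ B2 :=
            subset_antisymm
              (Finset.subset_inter Finset.inter_subset_left hc2)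
              (Finset.inter_subset_inter (subset_refl C) Finset.subset_union_right)
          have hCA : C ∩ B1 = C ∩ (B1 ∩ B2) := by
            apply subset_antisymm
            · refine Finset.subset_inter Finset.inter_subset_left ?_
              refine Finset.subset_inter Finset.inter_subset_right ?_
              intro x hx
              exact hc2 (by
                simp only [Finset.mem_inter, Finset.mem_union] at hx ⊢
                exact ⟨hx.1, Or.inl hx.2⟩)
            · exact Finset.inter_subset_inter (subset_refl C) Finset.inter_subset_left
          rw [hCD, hCA]; try ring
    have hsum_eq : ∑ C ∈ S, (N.pm C : ℤ) * cardStar (C ∩ B1)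
        + ∑ C ∈ S, (N.pm C : ℤ) * cardStar (C ∩ B2)
        = ∑ C ∈ S, (N.pm C : ℤ) * cardStar (C ∩ (B1 ∪ B2))
        + ∑ C ∈ S, (N.pm C : ℤ) * cardStar (C ∩ (B1 ∩ B2)) := by
      rw [← Finset.sum_add_distrib, ← Finset.sum_add_distrib]
      exact Finset.sum_congr rfl hterm_eq
    rw [e1, e2, e3, e4]; linarith
end

section
/- If {Aᵢ}_{i∈I} is a family of substructures of an S-structure N with each Aᵢ ≤ₛ N, then ⋂_{i∈I} Aᵢ ≤ₛ N. Consequently, every subset A ⊆ N has a unique smallest superset cl(A) with cl(A) ≤ₛ N. -/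
set_option linter.unusedSectionVars false
set_option linter.unusedTactic false


variable {α : Type*} [DecidableEq α] {β : Type*} [DecidableEq β]

lemma cardStar_ne_zero_iff (X : Finset α) : cardStar X ≠ 0 ↔ 3 ≤ X.card := by
  unfold cardStar
  rw [max_def]
  split_ifs <;> omega

lemma cardStar_submod_aux {a b c d : ℤ} (habcd : b + c = a + d)
    (hb : b ≤ a) (hc : c ≤ a) (hdb : d ≤ b) :
    max 0 (b - 2) + max 0 (c - 2) ≤ max 0 (a - 2) + max 0 (d - 2) := by
  rw [max_def, max_def, max_def, max_def]
  split_ifs <;> omega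

lemma cardStar_inter_submod (C U V : Finset α) :
    cardStar (C ∩ U) + cardStar (C ∩ V) ≤
      cardStar (C ∩ (U ∪ V)) + cardStar (C ∩ (U ∩ V)) := by
  have h1 : (C ∩ U) ∪ (C ∩ V) = C ∩ (U ∪ V) := (Finset.inter_union_distrib_left C U V).symm
  have h2 : (C ∩ U) ∩ (C ∩ V) = C ∩ (U ∩ V) := by
    ext x; simp [Finset.mem_inter]; tauto
  have hcard : (C ∩ U).card + (C ∩ V).card = (C ∩ (U ∪ V)).card + (C ∩ (U ∩ V)).card := by
    rw [← h1, ← h2]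
    exact (Finset.card_union_add_card_inter _ _).symm
  have hb : (C ∩ U).card ≤ (C ∩ (U ∪ V)).card :=
    Finset.card_le_card (Finset.inter_subset_inter subset_rfl Finset.subset_union_left)
  have hc : (C ∩ V).card ≤ (C ∩ (U ∪ V)).card :=
    Finset.card_le_card (Finset.inter_subset_inter subset_rfl Finset.subset_union_right)
  have hd : (C ∩ (U ∩ V)).card ≤ (C ∩ U).card :=
    Finset.card_le_card (Finset.inter_subset_inter subset_rfl Finset.inter_subset_left)
  unfold cardStar
  apply cardStar_submod_aux <;> push_cast <;> omega

lemma d0s_eq_sum (N : SStruct α) {X Y : Finset α} (hXY : X ⊆ Y) :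
    d0s N X = (X.card : ℤ) -
      ∑ C ∈ (N.finite_meets Y).toFinset, (N.pm C : ℤ) * cardStar (C ∩ X) := by
  unfold d0s
  congr 1
  apply finsum_eq_sum_of_support_subset
  intro C hC
  simp only [Function.mem_support, ne_eq, mul_eq_zero, not_or] at hC
  rw [Set.Finite.coe_toFinset]
  constructor
  · exact fun h => hC.1 (by simp [h])
  · have h3 : 3 ≤ (C ∩ X).card := (cardStar_ne_zero_iff _).mp hC.2
    exact h3.trans (Finset.card_le_card (Finset.inter_subset_inter subset_rfl hXY))

lemma d0s_submod (N : SStruct α) (U V : Finset α) :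
    d0s N (U ∪ V) + d0s N (U ∩ V) ≤ d0s N U + d0s N V := by
  have hU := d0s_eq_sum N (Y := U ∪ V) (Finset.subset_union_left (s₂ := V))
  have hV := d0s_eq_sum N (Y := U ∪ V) (Finset.subset_union_right (s₁ := U))
  have hUV := d0s_eq_sum N (Y := U ∪ V) (subset_rfl)
  have hI := d0s_eq_sum N (Y := U ∪ V)
    ((Finset.inter_subset_left (s₂ := V)).trans Finset.subset_union_left)
  rw [hU, hV, hUV, hI]
  have hcard : ((U ∪ V).card : ℤ) + ((U ∩ V).card : ℤ) = (U.card : ℤ) + V.card := by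
    exact_mod_cast congrArg (Nat.cast (R := ℤ)) (Finset.card_union_add_card_inter U V)
  have hsum : ∑ C ∈ (N.finite_meets (U ∪ V)).toFinset, (N.pm C : ℤ) * cardStar (C ∩ U)
      + ∑ C ∈ (N.finite_meets (U ∪ V)).toFinset, (N.pm C : ℤ) * cardStar (C ∩ V)
      ≤ ∑ C ∈ (N.finite_meets (U ∪ V)).toFinset, (N.pm C : ℤ) * cardStar (C ∩ (U ∪ V))
      + ∑ C ∈ (N.finite_meets (U ∪ V)).toFinset, (N.pm C : ℤ) * cardStar (C ∩ (U ∩ V)) := by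
    rw [← Finset.sum_add_distrib, ← Finset.sum_add_distrib]
    apply Finset.sum_le_sum
    intro C _
    rw [← mul_add, ← mul_add]
    apply mul_le_mul_of_nonneg_left (cardStar_inter_submod C U V) (by positivity)
  linarith

/-- Existence of a `d0s`-minimal (and then card-minimal) finite superset of `D` inside `B`. -/
lemma exists_min (N : SStruct α)
    (hBound : ∃ m : ℤ, ∀ X : Finset α, ↑X ⊆ N.carrier → m ≤ d0s N X)
    (B : Set α) (hB : B ⊆ N.carrier) (D : Finset α) (hD : ↑D ⊆ B) :
    ∃ W : Finset α, D ⊆ W ∧ ↑W ⊆ B ∧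
      (∀ Z : Finset α, D ⊆ Z → ↑Z ⊆ B → d0s N W ≤ d0s N Z) ∧
      (∀ Z : Finset α, D ⊆ Z → ↑Z ⊆ B → d0s N Z ≤ d0s N W → W.card ≤ Z.card) := by
  obtain ⟨m, hm⟩ := hBound
  have hbdd : ∃ b : ℤ, ∀ z, (∃ Z : Finset α, D ⊆ Z ∧ ↑Z ⊆ B ∧ d0s N Z = z) → b ≤ z := by
    refine ⟨m, ?_⟩
    rintro z ⟨Z, _, hZ, rfl⟩
    exact hm Z (hZ.trans hB)
  have hinh : ∃ z, ∃ Z : Finset α, D ⊆ Z ∧ ↑Z ⊆ B ∧ d0s N Z = z :=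
    ⟨d0s N D, D, subset_rfl, hD, rfl⟩
  obtain ⟨v, ⟨Z0, hZ01, hZ02, hZ03⟩, hvmin⟩ := Int.exists_least_of_bdd hbdd hinh
  have hKne : {k : ℕ | ∃ Z : Finset α, D ⊆ Z ∧ ↑Z ⊆ B ∧ d0s N Z = v ∧ Z.card = k}.Nonempty :=
    ⟨Z0.card, Z0, hZ01, hZ02, hZ03, rfl⟩
  obtain ⟨W, hW1, hW2, hW3, hW4⟩ := Nat.sInf_mem hKne
  refine ⟨W, hW1, hW2, ?_, ?_⟩
  · intro Z h1 h2
    rw [hW3]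
    exact hvmin _ ⟨Z, h1, h2, rfl⟩
  · intro Z h1 h2 h3
    have hZv : d0s N Z = v := le_antisymm (hW3 ▸ h3) (hvmin _ ⟨Z, h1, h2, rfl⟩)
    rw [hW4]
    exact Nat.sInf_le ⟨Z, h1, h2, hZv, rfl⟩

lemma inter_strong (N : SStruct α)
    (hBound : ∃ m : ℤ, ∀ X : Finset α, ↑X ⊆ N.carrier → m ≤ d0s N X)
    {I : Type*} [Nonempty I] (A : I → Set α)
    (hA : ∀ i, StrongIn N (A i) N.carrier) :
    StrongIn N (⋂ i, A i) N.carrier := by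
  have i₀ : I := Classical.arbitrary I
  have hsub : (⋂ i, A i) ⊆ N.carrier := (Set.iInter_subset A i₀).trans (hA i₀).1
  refine ⟨hsub, ?_⟩
  intro D hD hDfin
  have hDN : ↑D ⊆ N.carrier := hD.trans hsub
  -- global minimizer W of d0s over finite supersets of D in N.carrier, with minimal card
  obtain ⟨W, hDW, hWN, hWmin, hWcard⟩ := exists_min N hBound N.carrier subset_rfl D hDN
  -- W is contained in every A i
  have hWA : ∀ i, ↑W ⊆ A i := by
    intro i
    obtain ⟨Z, hDZ, hZA, hZmin, -⟩ := exists_min N hBound (A i) (hA i).1 D (hD.trans (Set.iInter_subset A i))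
    -- Z is strong in A i, hence strong in N
    have hZstrong : FinStrongIn N Z (A i) := by
      refine ⟨hZA, fun X hX => hZmin (X ∪ Z) (hDZ.trans Finset.subset_union_right) ?_⟩
      rw [Finset.coe_union]
      exact Set.union_subset hX hZA
    have hZN : FinStrongIn N Z N.carrier := (hA i).2 Z hZA hZstrong
    -- submodularity: d0s (W ∩ Z) ≤ d0s W
    have h1 : d0s N Z ≤ d0s N (W ∪ Z) := hZN.2 W hWN
    have h2 := d0s_submod N W Z
    have h3 : d0s N (W ∩ Z) ≤ d0s N W := by linarith
    have h4 : W.card ≤ (W ∩ Z).card := by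
      apply hWcard (W ∩ Z) (Finset.subset_inter hDW hDZ) ?_ h3
      exact (Finset.coe_subset.mpr Finset.inter_subset_left).trans hWN
    have h5 : W ∩ Z = W := Finset.eq_of_subset_of_card_le Finset.inter_subset_left h4
    intro x hx
    have hxZ : x ∈ W ∩ Z := h5.symm ▸ hx
    exact hZA (Finset.mem_inter.mp hxZ).2
  have hWInter : ↑W ⊆ ⋂ i, A i := Set.subset_iInter hWA
  -- from strongness of D in the intersection: d0s D ≤ d0s W
  have hDW2 : d0s N D ≤ d0s N W := by
    have := hDfin.2 W hWInter
    rwa [Finset.union_eq_left.mpr hDW] at this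
  refine ⟨hDN, fun X hX => ?_⟩
  refine hDW2.trans (hWmin (X ∪ D) Finset.subset_union_right ?_)
  rw [Finset.coe_union]
  exact Set.union_subset hX hDN


/-- an intersection of a (nonempty) family of strong substructures of `N`
is strong in `N`; consequently every subset `B` of `N` has a unique smallest strong
superset `cl(B) ≤ₛ N`. (We assume `d_s(∅, N)` exists, i.e. `d₀ₛ` is bounded below on
finite substructures of `N`.) -/
theorem stmt8 (N : SStruct α)
    (hBound : ∃ m : ℤ, ∀ X : Finset α, ↑X ⊆ N.carrier → m ≤ d0s N X)
    {I : Type*} [Nonempty I] (A : I → Set α)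
    (hA : ∀ i, StrongIn N (A i) N.carrier) :
    StrongIn N (⋂ i, A i) N.carrier ∧
    ∀ B : Set α, B ⊆ N.carrier →
      ∃! cl : Set α, B ⊆ cl ∧ StrongIn N cl N.carrier ∧
        ∀ B' : Set α, B ⊆ B' → StrongIn N B' N.carrier → cl ⊆ B' := by
  constructor
  · exact inter_strong N hBound A hA
  · intro B hB
    have hNself : StrongIn N N.carrier N.carrier := ⟨subset_rfl, fun D _ h => h⟩
    haveI : Nonempty {A' : Set α // B ⊆ A' ∧ StrongIn N A' N.carrier} :=
      ⟨⟨N.carrier, hB, hNself⟩⟩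
    set cl : Set α := ⋂ p : {A' : Set α // B ⊆ A' ∧ StrongIn N A' N.carrier}, (p : Set α)
      with hcl
    have h1 : B ⊆ cl := Set.subset_iInter fun p => p.2.1
    have h2 : StrongIn N cl N.carrier := inter_strong N hBound _ fun p => p.2.2
    have h3 : ∀ B' : Set α, B ⊆ B' → StrongIn N B' N.carrier → cl ⊆ B' := by
      intro B' hBB' hB'
      exact Set.iInter_subset _ (⟨B', hBB', hB'⟩ : {A' : Set α // B ⊆ A' ∧ StrongIn N A' N.carrier})
    refine ⟨cl, ⟨h1, h2, h3⟩, ?_⟩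
    rintro y ⟨hy1, hy2, hy3⟩
    exact Set.Subset.antisymm (hy3 cl h1 h2) (h3 y hy1 hy2)
end

section
/- Let D be a simple S-amalgam of B₁ and B₂ over A = B₁ ∩ B₂. Then d₀ₛ(B₂/A) = d₀ₛ(B₂/B₁). Moreover, if A ≤ₛ B₂ then B₁ ≤ₛ D, and if additionally A ≤ₛ B₁ then A ≤ₛ D. -/
variable {α : Type*} [DecidableEq α] {β : Type*} [DecidableEq β]

lemma cardStar_of_le {X : Finset α} (h : 3 ≤ X.card) : cardStar X = (X.card : ℤ) - 2 := by
  have : (3:ℤ) ≤ (X.card:ℤ) := by exact_mod_cast h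
  exact max_eq_right (by omega)

lemma cardStar_eq_zero {X : Finset α} (h : X.card < 3) : cardStar X = 0 := by
  have : (X.card:ℤ) < 3 := by exact_mod_cast h
  exact max_eq_left (by omega)

lemma supp_finite (N : SStruct α) (X : Finset α) :
    (Function.support fun C => (N.pm C : ℤ) * cardStar (C ∩ X)).Finite := by
  apply (N.finite_meets X).subset
  intro C hC
  simp only [Function.mem_support] at hC
  constructor
  · intro h; simp [h] at hC
  · by_contra h
    push_neg at h
    rw [cardStar_eq_zero h, mul_zero] at hC
    exact hC rfl

lemma key_point (D : SStruct α) (B1 B2 : Finset α)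
    (hamal : ∀ C : Finset α, D.pm C ≠ 0 → (C ∩ (B1 ∩ B2)).card < 3 →
      C ⊆ B1 ∨ C ⊆ B2) {U Y : Finset α}
    (hAU : B1 ∩ B2 ⊆ U) (hUB : U ⊆ B1) (hY : Y ⊆ B2) (C : Finset α) :
    (D.pm C : ℤ) * cardStar (C ∩ (U ∪ Y)) + (D.pm C : ℤ) * cardStar (C ∩ (B1 ∩ B2))
    = (D.pm C : ℤ) * cardStar (C ∩ U) + (D.pm C : ℤ) * cardStar (C ∩ ((B1 ∩ B2) ∪ Y)) := by
  rcases eq_or_ne (D.pm C) 0 with h | h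
  · simp [h]
  have hPQu : (C ∩ U) ∪ (C ∩ ((B1 ∩ B2) ∪ Y)) = C ∩ (U ∪ Y) := by
    ext x
    simp only [Finset.mem_union, Finset.mem_inter]
    constructor
    · rintro (⟨hx, hu⟩ | ⟨hx, (ha | hy)⟩)
      · exact ⟨hx, Or.inl hu⟩
      · exact ⟨hx, Or.inl (hAU (Finset.mem_inter.mpr ha))⟩
      · exact ⟨hx, Or.inr hy⟩
    · rintro ⟨hx, (hu | hy)⟩
      · exact Or.inl ⟨hx, hu⟩
      · exact Or.inr ⟨hx, Or.inr hy⟩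
  have hPQi : (C ∩ U) ∩ (C ∩ ((B1 ∩ B2) ∪ Y)) = C ∩ (B1 ∩ B2) := by
    ext x
    simp only [Finset.mem_union, Finset.mem_inter]
    constructor
    · rintro ⟨⟨hx, hu⟩, ⟨_, (ha | hy)⟩⟩
      · exact ⟨hx, ha⟩
      · exact ⟨hx, hUB hu, hY hy⟩
    · rintro ⟨hx, ha⟩
      exact ⟨⟨hx, hAU (Finset.mem_inter.mpr ha)⟩, hx, Or.inl ha⟩
  by_cases ha : 3 ≤ (C ∩ (B1 ∩ B2)).card
  · have hcard := Finset.card_union_add_card_inter (C ∩ U) (C ∩ ((B1 ∩ B2) ∪ Y))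
    rw [hPQu, hPQi] at hcard
    have h1 : 3 ≤ (C ∩ U).card :=
      le_trans ha (Finset.card_le_card (Finset.inter_subset_inter le_rfl hAU))
    have h2 : 3 ≤ (C ∩ ((B1 ∩ B2) ∪ Y)).card :=
      le_trans ha (Finset.card_le_card (Finset.inter_subset_inter le_rfl Finset.subset_union_left))
    have h3 : 3 ≤ (C ∩ (U ∪ Y)).card :=
      le_trans h1 (Finset.card_le_card (Finset.inter_subset_inter le_rfl Finset.subset_union_left))
    rw [cardStar_of_le ha, cardStar_of_le h1, cardStar_of_le h2, cardStar_of_le h3,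
      ← mul_add, ← mul_add]
    congr 1
    have : ((C ∩ (U ∪ Y)).card : ℤ) + ((C ∩ (B1 ∩ B2)).card : ℤ)
        = ((C ∩ U).card : ℤ) + ((C ∩ ((B1 ∩ B2) ∪ Y)).card : ℤ) := by exact_mod_cast hcard
    omega
  · push_neg at ha
    rcases hamal C h ha with hB | hB
    · have e1 : C ∩ (U ∪ Y) = C ∩ U := by
        ext x
        simp only [Finset.mem_union, Finset.mem_inter]
        constructor
        · rintro ⟨hx, (hu | hy)⟩
          · exact ⟨hx, hu⟩
          · exact ⟨hx, hAU (Finset.mem_inter.mpr ⟨hB hx, hY hy⟩)⟩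
        · rintro ⟨hx, hu⟩; exact ⟨hx, Or.inl hu⟩
      have e2 : C ∩ ((B1 ∩ B2) ∪ Y) = C ∩ (B1 ∩ B2) := by
        ext x
        simp only [Finset.mem_union, Finset.mem_inter]
        constructor
        · rintro ⟨hx, (ha' | hy)⟩
          · exact ⟨hx, ha'⟩
          · exact ⟨hx, hB hx, hY hy⟩
        · rintro ⟨hx, ha'⟩; exact ⟨hx, Or.inl ha'⟩
      rw [e1, e2]
    · have e1 : C ∩ U = C ∩ (B1 ∩ B2) := by
        ext x
        simp only [Finset.mem_inter]
        constructor
        · rintro ⟨hx, hu⟩; exact ⟨hx, hUB hu, hB hx⟩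
        · rintro ⟨hx, ha'⟩; exact ⟨hx, hAU (Finset.mem_inter.mpr ha')⟩
      have e2 : C ∩ (U ∪ Y) = C ∩ ((B1 ∩ B2) ∪ Y) := by
        ext x
        simp only [Finset.mem_union, Finset.mem_inter]
        constructor
        · rintro ⟨hx, (hu | hy)⟩
          · exact ⟨hx, Or.inl ⟨hUB hu, hB hx⟩⟩
          · exact ⟨hx, Or.inr hy⟩
        · rintro ⟨hx, (ha' | hy)⟩
          · exact ⟨hx, Or.inl (hAU (Finset.mem_inter.mpr ha'))⟩
          · exact ⟨hx, Or.inr hy⟩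
      rw [e1, e2]
      ring

lemma key (D : SStruct α) (B1 B2 : Finset α)
    (hamal : ∀ C : Finset α, D.pm C ≠ 0 → (C ∩ (B1 ∩ B2)).card < 3 →
      C ⊆ B1 ∨ C ⊆ B2) {U Y : Finset α}
    (hAU : B1 ∩ B2 ⊆ U) (hUB : U ⊆ B1) (hY : Y ⊆ B2) :
    d0s D (U ∪ Y) + d0s D (B1 ∩ B2) = d0s D U + d0s D ((B1 ∩ B2) ∪ Y) := by
  have hcard : (U ∪ Y).card + (B1 ∩ B2).card = U.card + ((B1 ∩ B2) ∪ Y).card := by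
    have hu : U ∪ ((B1 ∩ B2) ∪ Y) = U ∪ Y := by
      ext x
      simp only [Finset.mem_union]
      constructor
      · rintro (h | (h | h))
        · exact Or.inl h
        · exact Or.inl (hAU h)
        · exact Or.inr h
      · rintro (h | h)
        · exact Or.inl h
        · exact Or.inr (Or.inr h)
    have hi : U ∩ ((B1 ∩ B2) ∪ Y) = B1 ∩ B2 := by
      ext x
      simp only [Finset.mem_union, Finset.mem_inter]
      constructor
      · rintro ⟨hu', (ha | hy)⟩
        · exact ha
        · exact ⟨hUB hu', hY hy⟩
      · intro ha
        exact ⟨hAU (Finset.mem_inter.mpr ha), Or.inl ha⟩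
    have := Finset.card_union_add_card_inter U ((B1 ∩ B2) ∪ Y)
    rw [hu, hi] at this
    omega
  have hsum : (∑ᶠ C, (D.pm C : ℤ) * cardStar (C ∩ (U ∪ Y)))
      + (∑ᶠ C, (D.pm C : ℤ) * cardStar (C ∩ (B1 ∩ B2)))
      = (∑ᶠ C, (D.pm C : ℤ) * cardStar (C ∩ U))
      + (∑ᶠ C, (D.pm C : ℤ) * cardStar (C ∩ ((B1 ∩ B2) ∪ Y))) := by
    rw [← finsum_add_distrib (supp_finite D (U ∪ Y)) (supp_finite D (B1 ∩ B2)),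
      ← finsum_add_distrib (supp_finite D U) (supp_finite D ((B1 ∩ B2) ∪ Y))]
    exact finsum_congr (key_point D B1 B2 hamal hAU hUB hY)
  unfold d0s
  have : ((U ∪ Y).card : ℤ) + ((B1 ∩ B2).card : ℤ)
      = (U.card : ℤ) + (((B1 ∩ B2) ∪ Y).card : ℤ) := by exact_mod_cast hcard
  linarith

/-- let `D` be a simple S-amalgam of `B₁` and `B₂` over `A = B₁ ∩ B₂`
(its carrier is `B₁ ∪ B₂` and every maximal clique of `D` not extending a clique of `A`
lies entirely within `B₁` or within `B₂`). Then `d₀ₛ(B₂/A) = d₀ₛ(B₂/B₁)`; moreover if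
`A ≤ₛ B₂` then `B₁ ≤ₛ D`, and if additionally `A ≤ₛ B₁` then `A ≤ₛ D`. -/
theorem stmt9 (D : SStruct α) (B1 B2 : Finset α)
    (hcar : D.carrier = ↑B1 ∪ ↑B2)
    (hamal : ∀ C : Finset α, D.pm C ≠ 0 → (C ∩ (B1 ∩ B2)).card < 3 →
      C ⊆ B1 ∨ C ⊆ B2) :
    (d0s D (B1 ∪ B2) - d0s D B1 = d0s D B2 - d0s D (B1 ∩ B2)) ∧
    (FinStrongIn D (B1 ∩ B2) ↑B2 → FinStrongIn D B1 D.carrier) ∧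
    (FinStrongIn D (B1 ∩ B2) ↑B2 → FinStrongIn D (B1 ∩ B2) ↑B1 →
      FinStrongIn D (B1 ∩ B2) D.carrier) := by
  have hA2 : (B1 ∩ B2 : Finset α) ⊆ B2 := Finset.inter_subset_right
  have hA1 : (B1 ∩ B2 : Finset α) ⊆ B1 := Finset.inter_subset_left
  refine ⟨?_, ?_, ?_⟩
  · have h := key D B1 B2 hamal hA1 (Finset.Subset.refl B1) (Finset.Subset.refl B2)
    have e : (B1 ∩ B2) ∪ B2 = B2 := Finset.union_eq_right.mpr hA2
    rw [e] at h
    linarith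
  · intro h2
    constructor
    · rw [hcar]; exact Set.subset_union_left
    · intro X hX
      rw [hcar] at hX
      have hXB : X ⊆ B1 ∪ B2 := by
        rw [← Finset.coe_subset, Finset.coe_union]; exact hX
      have e : X ∪ B1 = B1 ∪ (X ∩ B2) := by
        ext x
        simp only [Finset.mem_union, Finset.mem_inter]
        constructor
        · rintro (hx | hb)
          · rcases Finset.mem_union.mp (hXB hx) with h | h
            · exact Or.inl h
            · exact Or.inr ⟨hx, h⟩
          · exact Or.inl hb
        · rintro (hb | ⟨hx, _⟩)
          · exact Or.inr hb
          · exact Or.inl hx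
      have hk := key D B1 B2 hamal (Y := X ∩ B2) hA1 (Finset.Subset.refl B1) Finset.inter_subset_right
      have hs := h2.2 (X ∩ B2) (Finset.coe_subset.mpr Finset.inter_subset_right)
      rw [Finset.union_comm (X ∩ B2) (B1 ∩ B2)] at hs
      rw [e]
      linarith
  · intro h2 h1
    constructor
    · rw [hcar]
      refine subset_trans ?_ (Set.subset_union_left)
      exact_mod_cast Finset.coe_subset.mpr hA1
    · intro X hX
      rw [hcar] at hX
      have hXB : X ⊆ B1 ∪ B2 := by
        rw [← Finset.coe_subset, Finset.coe_union]; exact hX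
      set U := (X ∩ B1) ∪ (B1 ∩ B2) with hU
      have hAU : B1 ∩ B2 ⊆ U := Finset.subset_union_right
      have hUB : U ⊆ B1 := by
        intro x hx
        rcases Finset.mem_union.mp hx with h | h
        · exact (Finset.mem_inter.mp h).2
        · exact (Finset.mem_inter.mp h).1
      have e : U ∪ (X ∩ B2) = X ∪ (B1 ∩ B2) := by
        ext x
        simp only [hU, Finset.mem_union, Finset.mem_inter]
        constructor
        · rintro ((⟨hx, _⟩ | ha) | ⟨hx, _⟩)
          · exact Or.inl hx
          · exact Or.inr ha
          · exact Or.inl hx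
        · rintro (hx | ha)
          · rcases Finset.mem_union.mp (hXB hx) with h | h
            · exact Or.inl (Or.inl ⟨hx, h⟩)
            · exact Or.inr ⟨hx, h⟩
          · exact Or.inl (Or.inr ha)
      have hk := key D B1 B2 hamal (Y := X ∩ B2) hAU hUB Finset.inter_subset_right
      rw [e] at hk
      have hs2 := h2.2 (X ∩ B2) (Finset.coe_subset.mpr Finset.inter_subset_right)
      rw [Finset.union_comm (X ∩ B2) (B1 ∩ B2)] at hs2
      have hs1 := h1.2 (X ∩ B1) (Finset.coe_subset.mpr Finset.inter_subset_right)
      rw [Finset.union_comm (X ∩ B1) (B1 ∩ B2)] at hs1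
      have hUe : d0s D U = d0s D ((B1 ∩ B2) ∪ (X ∩ B1)) := by
        rw [hU, Finset.union_comm]
      linarith
end

section
/- Let A be a finite R-structure with d₀(X) ≥ 0 for every X ⊆ A, and let K = {C₁,…,Cₙ} be a set of maximal S-cliques in A whose witnesses all lie in A. Then there exists a clique Cₖ ∈ K such that the number of generating relations of Cₖ shared with other cliques of K is at most 2, i.e. |RW(Cₖ) ∩ ⋃_{i≠k} RW(Cᵢ)| ≤ 2. -/
variable {α : Type*} [DecidableEq α]

/-- A clique presented as a pair (universe, witness pair). -/
def IsMaxCliqueP (R : α → α → α → Prop) (A : Finset α) (p : Finset α × Finset α) : Prop :=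
  ∃ x y : α, x ≠ y ∧ p.2 = {x, y} ∧ IsMaxCliqueIn R (↑A) p.1 x y

/-- `RW(C, w)`: the generating relations `{c} ∪ w`, `c ∈ C`, of the clique `(C, w)`. -/
def RW (p : Finset α × Finset α) : Finset (Finset α) :=
  p.1.image (fun c => insert c p.2)

section StmtTenAux

variable {α : Type*} [DecidableEq α] {R : α → α → α → Prop}

private lemma pair_witness_card {A : Finset α} {p : Finset α × Finset α}
    (hp : IsMaxCliqueP R A p) : p.2.card = 2 := by
  obtain ⟨x, y, hxy, hp2, -⟩ := hp
  rw [hp2]; exact Finset.card_pair hxy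

private lemma rw_struct (hR : SymIrr R) {A : Finset α} {p : Finset α × Finset α}
    (hp : IsMaxCliqueP R A p) {s : Finset α} (hs : s ∈ RW p) :
    s.card = 3 ∧ p.2 ⊆ s ∧
      ∃ x y z : α, x ≠ y ∧ x ≠ z ∧ y ≠ z ∧ s = {x, y, z} ∧ R x y z := by
  obtain ⟨x, y, hxy, hp2, ⟨⟨-, -, hxC, hyC, hRall⟩, -, -⟩⟩ := hp
  obtain ⟨c, hc, rfl⟩ := Finset.mem_image.mp hs
  have hcx : c ≠ x := fun h => hxC (h ▸ hc)
  have hcy : c ≠ y := fun h => hyC (h ▸ hc)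
  rw [hp2]
  refine ⟨?_, Finset.subset_insert _ _, c, x, y, hcx, hcy, hxy, rfl, hRall c hc⟩
  rw [Finset.card_insert_of_notMem (by simp [hcx, hcy]), Finset.card_pair hxy]

private lemma pair_eq_cases {x y x' y' : α} (hxy : x ≠ y)
    (h : ({x, y} : Finset α) = {x', y'}) :
    (x' = x ∧ y' = y) ∨ (x' = y ∧ y' = x) := by
  have hx : x' ∈ ({x, y} : Finset α) := by rw [h]; simp
  have hy : y' ∈ ({x, y} : Finset α) := by rw [h]; simp
  have hxm : x ∈ ({x', y'} : Finset α) := by rw [← h]; simp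
  have hym : y ∈ ({x', y'} : Finset α) := by rw [← h]; simp
  simp only [Finset.mem_insert, Finset.mem_singleton] at hxm hym
  rcases hxm with rfl | rfl <;> rcases hym with rfl | rfl <;>
    first
      | tauto
      | simp_all

private lemma witness_unique (hR : SymIrr R) {A : Finset α} {p q : Finset α × Finset α}
    (hp : IsMaxCliqueP R A p) (hq : IsMaxCliqueP R A q) (h2 : p.2 = q.2) : p = q := by
  obtain ⟨x, y, hxy, hp2, ⟨⟨-, -, hxC, hyC, hRp⟩, hpA, hpm⟩⟩ := hp
  obtain ⟨x', y', hxy', hq2, ⟨⟨-, -, hxC', hyC', hRq⟩, hqA, hqm⟩⟩ := hq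
  have hpair : ({x, y} : Finset α) = {x', y'} := by rw [← hp2, h2, hq2]
  have hcases := pair_eq_cases hxy hpair
  have hsub : ∀ (C C' : Finset α), (↑C : Set α) ⊆ ↑A →
      (x ∉ C) → (y ∉ C) → (∀ c ∈ C, R c x y) →
      (∀ a ∈ (↑A : Set α), a ∉ C' → a ≠ x' → a ≠ y' → ¬ R a x' y') → C ⊆ C' := by
    intro C C' hCA hxncv hyncv hRall hmax c hc
    by_contra hc'
    have hcA : c ∈ (↑A : Set α) := hCA hc
    have hcx : c ≠ x := fun h => hxncv (h ▸ hc)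
    have hcy : c ≠ y := fun h => hyncv (h ▸ hc)
    have hRcxy : R c x y := hRall c hc
    rcases hcases with ⟨rfl, rfl⟩ | ⟨rfl, rfl⟩
    · exact hmax c hcA hc' hcx hcy hRcxy
    · exact hmax c hcA hc' hcy hcx (hR.2.1 _ _ _ hRcxy)
  have h1 : p.1 = q.1 := by
    apply Finset.Subset.antisymm
    · exact hsub p.1 q.1 hpA hxC hyC hRp hqm
    · -- symmetric direction
      intro c hc
      by_contra hc'
      have hcA : c ∈ (↑A : Set α) := hqA hc
      have hcx' : c ≠ x' := fun h => hxC' (h ▸ hc)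
      have hcy' : c ≠ y' := fun h => hyC' (h ▸ hc)
      have hRc : R c x' y' := hRq c hc
      rcases hcases with ⟨rfl, rfl⟩ | ⟨rfl, rfl⟩
      · exact hpm c hcA hc' hcx' hcy' hRc
      · exact hpm c hcA hc' hcy' hcx' (hR.2.1 _ _ _ hRc)
  exact Prod.ext h1 h2

private lemma shared_eq (hR : SymIrr R) {A : Finset α} {p q : Finset α × Finset α}
    (hp : IsMaxCliqueP R A p) (hq : IsMaxCliqueP R A q) (hne : p ≠ q)
    {s : Finset α} (hsp : s ∈ RW p) (hsq : s ∈ RW q) : s = p.2 ∪ q.2 := by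
  obtain ⟨hcard, hps, -⟩ := rw_struct hR hp hsp
  obtain ⟨-, hqs, -⟩ := rw_struct hR hq hsq
  have hU : p.2 ∪ q.2 ⊆ s := Finset.union_subset hps hqs
  have h2p := pair_witness_card hp
  have h2q := pair_witness_card hq
  have hne2 : p.2 ≠ q.2 := fun h => hne (witness_unique hR hp hq h)
  have h3 : 3 ≤ (p.2 ∪ q.2).card := by
    by_contra h
    push_neg at h
    have hpe : p.2 = p.2 ∪ q.2 :=
      Finset.eq_of_subset_of_card_le Finset.subset_union_left (by omega)
    have hqe : q.2 = p.2 ∪ q.2 :=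
      Finset.eq_of_subset_of_card_le Finset.subset_union_right (by omega)
    exact hne2 (hpe.trans hqe.symm)
  exact (Finset.eq_of_subset_of_card_le hU (by omega)).symm

end StmtTenAux

/-- if every subset of the finite `R`-structure `A` has nonnegative
predimension and `K` is a (nonempty) set of maximal S-cliques of `A` all of whose
witnesses lie in `A`, then some clique in `K` shares at most 2 of its generating
relations with the other cliques of `K`. -/
theorem stmt10 (R : α → α → α → Prop) (hR : SymIrr R)
    (A : Finset α) (hd : ∀ X : Finset α, X ⊆ A → 0 ≤ d0 R X)
    (K : Finset (Finset α × Finset α)) (hKne : K.Nonempty)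
    (hK : ∀ p ∈ K, IsMaxCliqueP R A p ∧ p.2 ⊆ A) :
    ∃ p ∈ K, (RW p ∩ (K.erase p).biUnion RW).card ≤ 2 := by
  classical
  by_contra hcon
  push_neg at hcon
  -- `Sh p` : the relations of `p` shared with other cliques of `K`
  set Sh : Finset α × Finset α → Finset (Finset α) :=
    fun p => RW p ∩ (K.erase p).biUnion RW with hShdef
  have hcon' : ∀ p ∈ K, 3 ≤ (Sh p).card := by
    intro p hp
    have h := hcon p hp
    simp only [hShdef]
    omega
  set S : Finset (Finset α) := K.biUnion Sh with hSdef
  set X : Finset α := K.biUnion (fun p => p.2) with hXdef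
  have hp2X : ∀ p ∈ K, p.2 ⊆ X := by
    intro p hp x hx
    exact Finset.mem_biUnion.mpr ⟨p, hp, hx⟩
  have hXA : X ⊆ A := by
    intro x hx
    obtain ⟨p, hpK, hx⟩ := Finset.mem_biUnion.mp hx
    exact (hK p hpK).2 hx
  -- extracting the structure of shared relations
  have hShmem : ∀ p ∈ K, ∀ s ∈ Sh p, s ∈ RW p ∧ ∃ q ∈ K, q ≠ p ∧ s ∈ RW q := by
    intro p hp s hs
    rw [hShdef] at hs
    obtain ⟨hs1, hs2⟩ := Finset.mem_inter.mp hs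
    obtain ⟨q, hq, hsq⟩ := Finset.mem_biUnion.mp hs2
    exact ⟨hs1, q, (Finset.mem_erase.mp hq).2, (Finset.mem_erase.mp hq).1, hsq⟩
  have hSmem : ∀ s ∈ S, ∃ p ∈ K, s ∈ Sh p := by
    intro s hs
    exact Finset.mem_biUnion.mp hs
  have hScard3 : ∀ s ∈ S, s.card = 3 := by
    intro s hs
    obtain ⟨p, hpK, hsp⟩ := hSmem s hs
    exact (rw_struct hR (hK p hpK).1 (hShmem p hpK s hsp).1).1
  have hSsubX : ∀ s ∈ S, s ⊆ X := by
    intro s hs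
    obtain ⟨p, hpK, hsp⟩ := hSmem s hs
    obtain ⟨hsRWp, q, hqK, hqne, hsRWq⟩ := hShmem p hpK s hsp
    have := shared_eq hR (hK p hpK).1 (hK q hqK).1 (Ne.symm hqne) hsRWp hsRWq
    rw [this]
    exact Finset.union_subset (hp2X p hpK) (hp2X q hqK)
  -- |S| ≤ r(X) ≤ |X|
  have hSr : S.card ≤ rCount R X := by
    have hsub : (↑S : Set (Finset α)) ⊆
        {s : Finset α | s ⊆ X ∧ ∃ x y z : α,
          x ≠ y ∧ x ≠ z ∧ y ≠ z ∧ s = {x, y, z} ∧ R x y z} := by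
      intro s hs
      have hs' : s ∈ S := hs
      obtain ⟨p, hpK, hsp⟩ := hSmem s hs'
      exact ⟨hSsubX s hs', (rw_struct hR (hK p hpK).1 (hShmem p hpK s hsp).1).2.2⟩
    have hfin : {s : Finset α | s ⊆ X ∧ ∃ x y z : α,
        x ≠ y ∧ x ≠ z ∧ y ≠ z ∧ s = {x, y, z} ∧ R x y z}.Finite := by
      apply Set.Finite.subset X.powerset.finite_toSet
      intro s hs
      simpa using hs.1
    calc S.card = (↑S : Set (Finset α)).ncard := (Set.ncard_coe_finset S).symm
      _ ≤ _ := Set.ncard_le_ncard hsub hfin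
  have hrX : rCount R X ≤ X.card := by
    have := hd X hXA
    unfold d0 at this
    omega
  -- double counting degrees
  set deg : α → ℕ := fun x => (S.filter fun s => x ∈ s).card with hdegdef
  have hsum : ∑ x ∈ X, deg x = 3 * S.card := by
    calc ∑ x ∈ X, deg x = ∑ x ∈ X, ∑ s ∈ S, if x ∈ s then 1 else 0 := by
          refine Finset.sum_congr rfl fun x _ => ?_
          rw [hdegdef]
          exact Finset.card_filter _ _
      _ = ∑ s ∈ S, ∑ x ∈ X, if x ∈ s then 1 else 0 := Finset.sum_comm
      _ = ∑ s ∈ S, (X.filter fun x => x ∈ s).card := by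
          refine Finset.sum_congr rfl fun s _ => (Finset.card_filter _ _).symm
      _ = ∑ s ∈ S, s.card := by
          refine Finset.sum_congr rfl fun s hs => ?_
          rw [Finset.filter_mem_eq_inter, Finset.inter_eq_right.mpr (hSsubX s hs)]
      _ = ∑ _s ∈ S, 3 := Finset.sum_congr rfl hScard3
      _ = 3 * S.card := by rw [Finset.sum_const, smul_eq_mul, mul_comm]
  have hdeg3 : ∀ x ∈ X, 3 ≤ deg x := by
    intro x hx
    obtain ⟨p, hpK, hxp⟩ := Finset.mem_biUnion.mp hx
    have hsub : Sh p ⊆ S.filter (fun s => x ∈ s) := by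
      intro s hs
      refine Finset.mem_filter.mpr ⟨Finset.mem_biUnion.mpr ⟨p, hpK, hs⟩, ?_⟩
      exact (rw_struct hR (hK p hpK).1 (hShmem p hpK s hs).1).2.1 hxp
    exact le_trans (hcon' p hpK) (Finset.card_le_card hsub)
  have hXS : 3 * X.card ≤ 3 * S.card := by
    calc 3 * X.card = ∑ _x ∈ X, 3 := by rw [Finset.sum_const, smul_eq_mul, mul_comm]
      _ ≤ ∑ x ∈ X, deg x := Finset.sum_le_sum hdeg3
      _ = 3 * S.card := hsum
  have hsum_eq : ∑ _x ∈ X, 3 = ∑ x ∈ X, deg x := by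
    have h1 : ∑ _x ∈ X, (3 : ℕ) = 3 * X.card := by
      rw [Finset.sum_const, smul_eq_mul, mul_comm]
    omega
  have hdegeq : ∀ x ∈ X, deg x = 3 := by
    intro x hx
    exact ((Finset.sum_eq_sum_iff_of_le hdeg3).mp hsum_eq x hx).symm
  -- the final contradiction
  obtain ⟨p0, hp0K⟩ := hKne
  have hSh0 := hcon' p0 hp0K
  obtain ⟨s1, hs1⟩ := Finset.card_pos.mp (by omega : 0 < (Sh p0).card)
  obtain ⟨hs1p, q, hqK, hqne, hs1q⟩ := hShmem p0 hp0K s1 hs1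
  have hsEq : s1 = p0.2 ∪ q.2 :=
    shared_eq hR (hK p0 hp0K).1 (hK q hqK).1 (Ne.symm hqne) hs1p hs1q
  have hs1card : s1.card = 3 := (rw_struct hR (hK p0 hp0K).1 hs1p).1
  have h2p := pair_witness_card (hK p0 hp0K).1
  have h2q := pair_witness_card (hK q hqK).1
  have hint : (p0.2 ∩ q.2).Nonempty := by
    rw [Finset.nonempty_iff_ne_empty]
    intro h
    have hcui := Finset.card_union_add_card_inter p0.2 q.2
    rw [h, ← hsEq] at hcui
    simp only [Finset.card_empty] at hcui
    omega
  obtain ⟨e, he⟩ := hint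
  have hep : e ∈ p0.2 := Finset.mem_of_mem_inter_left he
  have heq : e ∈ q.2 := Finset.mem_of_mem_inter_right he
  have heX : e ∈ X := hp2X p0 hp0K hep
  set T : Finset (Finset α) := S.filter (fun s => e ∈ s) with hTdef
  have hTcard : T.card = 3 := hdegeq e heX
  have hsubT : ∀ r ∈ K, e ∈ r.2 → Sh r ⊆ T := by
    intro r hrK her s hs
    refine Finset.mem_filter.mpr ⟨Finset.mem_biUnion.mpr ⟨r, hrK, hs⟩, ?_⟩
    exact (rw_struct hR (hK r hrK).1 (hShmem r hrK s hs).1).2.1 her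
  have hP : Sh p0 = T :=
    Finset.eq_of_subset_of_card_le (hsubT p0 hp0K hep) (by omega)
  have hQ : Sh q = T :=
    Finset.eq_of_subset_of_card_le (hsubT q hqK heq)
      (by have := hcon' q hqK; omega)
  have hall : ∀ s ∈ Sh p0, s = s1 := by
    intro s hs
    have hsq' : s ∈ Sh q := by rw [hQ, ← hP]; exact hs
    have h1 : p0.2 ⊆ s :=
      (rw_struct hR (hK p0 hp0K).1 (hShmem p0 hp0K s hs).1).2.1
    have h2 : q.2 ⊆ s :=
      (rw_struct hR (hK q hqK).1 (hShmem q hqK s hsq').1).2.1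
    have hscard : s.card = 3 :=
      (rw_struct hR (hK p0 hp0K).1 (hShmem p0 hp0K s hs).1).1
    have hs1s : s1 ⊆ s := by
      rw [hsEq]
      exact Finset.union_subset h1 h2
    exact (Finset.eq_of_subset_of_card_le hs1s (by omega)).symm
  have hsub1 : Sh p0 ⊆ {s1} := fun s hs => Finset.mem_singleton.mpr (hall s hs)
  have := Finset.card_le_card hsub1
  simp only [Finset.card_singleton] at this
  omega
end

section
/- In the graph-theoretic core of the previous lemma: let G = (V,E) be a connected graph on n ≥ 4 vertices, where each vertex is a 2-element subset of a ground set A, each edge {u,v} corresponds to the 3-element set u ∪ v (so adjacent vertices intersect), edges corresponding to the same 3-element set form either a single edge or a triangle ('strong triangle'), and each vertex is incident to edges representing at least 3 distinct 3-element sets that are each represented by at least one other incidence. If G consists of t strong triangles and s simple edges, then the set ⋃V ⊆ A satisfies |⋃V| < (number of distinct 3-element sets represented by edges), i.e. there is a subset of A whose number of elements is strictly less than the number of distinct triples attached to it. -/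
attribute [local instance] Classical.propDecidable

variable {α : Type*} [DecidableEq α]

/-- Relation: x and y lie on a common edge of E. -/
def HRel (E : Finset (Finset α)) (x y : α) : Prop := ∃ e ∈ E, x ∈ e ∧ y ∈ e

/-- n-step reachability from r. -/
def reachN (E : Finset (Finset α)) (r : α) : ℕ → α → Prop
  | 0 => fun a => a = r
  | n+1 => fun a => reachN E r n a ∨ ∃ b, reachN E r n b ∧ HRel E b a

lemma reachN_of_rtg {E : Finset (Finset α)} {r a : α}
    (h : Relation.ReflTransGen (HRel E) r a) : ∃ n, reachN E r n a := by
  induction h with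
  | refl => exact ⟨0, rfl⟩
  | tail h1 h2 ih => obtain ⟨n, hn⟩ := ih; exact ⟨n+1, Or.inr ⟨_, hn, h2⟩⟩

/-- Key lemma: connected graph with edges = 2-element sets has ≤ |E|+1 vertices. -/
lemma card_biUnion_le (E : Finset (Finset α)) (h2 : ∀ e ∈ E, e.card = 2)
    (hc : ∀ x ∈ E.biUnion id, ∀ y ∈ E.biUnion id,
      Relation.ReflTransGen (HRel E) x y) :
    (E.biUnion id).card ≤ E.card + 1 := by
  set W := E.biUnion id with hW
  rcases W.eq_empty_or_nonempty with h | ⟨r, hr⟩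
  · simp [h]
  have hex : ∀ a ∈ W, ∃ n, reachN E r n a := fun a ha => reachN_of_rtg (hc r hr a ha)
  classical
  set d : α → ℕ := fun a => if h : ∃ n, reachN E r n a then Nat.find h else 0 with hd
  -- for each a in W.erase r there is an edge containing a and a closer vertex
  have key : ∀ a ∈ W.erase r, ∃ e, e ∈ E ∧ a ∈ e ∧ ∃ b ∈ e, d b < d a := by
    intro a ha
    rw [Finset.mem_erase] at ha
    obtain ⟨hne, haW⟩ := ha
    have h := hex a haW
    have hda : d a = Nat.find h := by rw [hd]; simp [h]
    have hspec : reachN E r (Nat.find h) a := Nat.find_spec h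
    obtain ⟨k, hk⟩ : ∃ k, Nat.find h = k + 1 := by
      cases hnf : Nat.find h with
      | zero => rw [hnf] at hspec; exact absurd hspec hne
      | succ k => exact ⟨k, rfl⟩
    rw [hk] at hspec
    rcases hspec with h1 | ⟨b, hb, e, heE, hbe, hae⟩
    · have := Nat.find_le (h := h) h1; omega
    · refine ⟨e, heE, hae, b, hbe, ?_⟩
      have hb' : ∃ n, reachN E r n b := ⟨k, hb⟩
      have : d b ≤ k := by rw [hd]; simp only [hb', dif_pos]; exact Nat.find_le hb
      omega
  set f : α → Finset α := fun a => if h : ∃ e, e ∈ E ∧ a ∈ e ∧ ∃ b ∈ e, d b < d a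
    then Classical.choose h else ∅ with hf
  have hfspec : ∀ a ∈ W.erase r, f a ∈ E ∧ a ∈ f a ∧ ∃ b ∈ f a, d b < d a := by
    intro a ha
    have h := key a ha
    rw [hf]; simp only [h, dif_pos]
    exact Classical.choose_spec h
  have hinj : Set.InjOn f (W.erase r) := by
    intro a ha a' ha' hfe
    by_contra hne
    obtain ⟨heE, hae, b, hbe, hdb⟩ := hfspec a ha
    obtain ⟨_, hae', b', hbe', hdb'⟩ := hfspec a' ha'
    rw [hfe] at hae hbe
    -- f a' has card 2 and contains a, a', so equals {a, a'}
    have hcard : (f a').card = 2 := h2 _ (hfe ▸ heE)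
    have hsub : ({a, a'} : Finset α) ⊆ f a' := by
      intro x hx
      rcases Finset.mem_insert.1 hx with rfl | hx
      · exact hae
      · rw [Finset.mem_singleton] at hx; subst hx; exact hae'
    have hcard2 : ({a, a'} : Finset α).card = 2 := by
      rw [Finset.card_insert_of_notMem (by simp [hne]), Finset.card_singleton]
    have heq : ({a, a'} : Finset α) = f a' :=
      Finset.eq_of_subset_of_card_le hsub (by omega)
    have hb : b = a' := by
      have : b ∈ ({a, a'} : Finset α) := heq ▸ hbe
      rcases Finset.mem_insert.1 this with rfl | h
      · omega
      · exact Finset.mem_singleton.1 h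
    have hb' : b' = a := by
      have : b' ∈ ({a, a'} : Finset α) := heq ▸ hbe'
      rcases Finset.mem_insert.1 this with rfl | h
      · rfl
      · rw [Finset.mem_singleton] at h; subst h; omega
    subst hb; subst hb'; omega
  have := Finset.card_le_card_of_injOn f (fun a ha => (hfspec a ha).1) hinj
  have : (W.erase r).card ≤ E.card := this
  have hcr := Finset.card_erase_of_mem hr
  omega

lemma rtg_transfer {E E' : Finset (Finset α)}
    (h : ∀ e ∈ E, ∀ x ∈ e, ∀ y ∈ e, Relation.ReflTransGen (HRel E') x y) :
    ∀ {x y : α}, Relation.ReflTransGen (HRel E) x y →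
      Relation.ReflTransGen (HRel E') x y := by
  intro x y hxy
  induction hxy with
  | refl => exact Relation.ReflTransGen.refl
  | tail h1 h2 ih =>
    obtain ⟨e, heE, hbe, hce⟩ := h2
    exact ih.trans (h e heE _ hbe _ hce)

lemma biUnion_erase_eq {E : Finset (Finset α)} {e : Finset α}
    (hcov : ∀ x ∈ e, ∃ e' ∈ E.erase e, x ∈ e') :
    (E.erase e).biUnion id = E.biUnion id := by
  apply Finset.Subset.antisymm
  · exact Finset.biUnion_subset_biUnion_of_subset_left _ (Finset.erase_subset _ _)
  · intro x hx
    obtain ⟨g, hgE, hxg⟩ := Finset.mem_biUnion.1 hx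
    by_cases hge : g = e
    · subst hge
      obtain ⟨e', he', hxe'⟩ := hcov x hxg
      exact Finset.mem_biUnion.2 ⟨e', he', hxe'⟩
    · exact Finset.mem_biUnion.2 ⟨g, Finset.mem_erase.2 ⟨hge, hgE⟩, hxg⟩

/-- Erasing one edge of a triangle keeps the graph connected with the same vertex set. -/
lemma erase_tri {E : Finset (Finset α)} {a b c : α}
    (hab : ({a,b} : Finset α) ∈ E) (hbc : ({b,c} : Finset α) ∈ E)
    (hac : ({a,c} : Finset α) ∈ E)
    (hbcab : ({b,c} : Finset α) ≠ {a,b}) (hacab : ({a,c} : Finset α) ≠ {a,b})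
    (hc : ∀ x ∈ E.biUnion id, ∀ y ∈ E.biUnion id,
      Relation.ReflTransGen (HRel E) x y) :
    ((E.erase {a,b}).biUnion id = E.biUnion id) ∧
    (∀ x ∈ (E.erase {a,b}).biUnion id, ∀ y ∈ (E.erase {a,b}).biUnion id,
      Relation.ReflTransGen (HRel (E.erase {a,b})) x y) := by
  set E' := E.erase ({a,b} : Finset α) with hE'
  have hbcE' : ({b,c} : Finset α) ∈ E' := Finset.mem_erase.2 ⟨hbcab, hbc⟩
  have hacE' : ({a,c} : Finset α) ∈ E' := Finset.mem_erase.2 ⟨hacab, hac⟩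
  have hpath : ∀ x ∈ ({a,b} : Finset α), ∀ y ∈ ({a,b} : Finset α),
      Relation.ReflTransGen (HRel E') x y := by
    have hstep1 : HRel E' a c := ⟨{a,c}, hacE', by simp, by simp⟩
    have hstep2 : HRel E' c b := ⟨{b,c}, hbcE', by simp, by simp⟩
    have hab' : Relation.ReflTransGen (HRel E') a b :=
      (Relation.ReflTransGen.single hstep1).tail hstep2
    have hstep3 : HRel E' b c := ⟨{b,c}, hbcE', by simp, by simp⟩
    have hstep4 : HRel E' c a := ⟨{a,c}, hacE', by simp, by simp⟩
    have hba' : Relation.ReflTransGen (HRel E') b a :=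
      (Relation.ReflTransGen.single hstep3).tail hstep4
    intro x hx y hy
    rcases Finset.mem_insert.1 hx with rfl | hx
    · rcases Finset.mem_insert.1 hy with rfl | hy
      · exact Relation.ReflTransGen.refl
      · rw [Finset.mem_singleton] at hy; subst hy; exact hab'
    · rw [Finset.mem_singleton] at hx; subst hx
      rcases Finset.mem_insert.1 hy with rfl | hy
      · exact hba'
      · rw [Finset.mem_singleton] at hy; subst hy; exact Relation.ReflTransGen.refl
  have hcov : ∀ x ∈ ({a,b} : Finset α), ∃ e' ∈ E', x ∈ e' := by
    intro x hx
    rcases Finset.mem_insert.1 hx with rfl | hx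
    · refine ⟨_, hacE', ?_⟩; simp
    · rw [Finset.mem_singleton] at hx; subst hx
      refine ⟨_, hbcE', ?_⟩; simp
  have htrans : ∀ e ∈ E, ∀ x ∈ e, ∀ y ∈ e, Relation.ReflTransGen (HRel E') x y := by
    intro e heE x hx y hy
    by_cases hee : e = {a,b}
    · subst hee; exact hpath x hx y hy
    · exact Relation.ReflTransGen.single ⟨e, Finset.mem_erase.2 ⟨hee, heE⟩, hx, hy⟩
  have hbu := biUnion_erase_eq (E := E) (e := {a,b}) hcov
  refine ⟨hbu, ?_⟩
  intro x hx y hy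
  rw [hbu] at hx hy
  exact rtg_transfer htrans (hc x hx y hy)

lemma elem_conn {V : Finset (Finset α)} {Adj : Finset α → Finset α → Prop}
    (hv2 : ∀ v ∈ V, v.card = 2)
    (hAdjV : ∀ u v, Adj u v → u ∈ V ∧ v ∈ V)
    (hinter : ∀ u v, Adj u v → (u ∪ v).card = 3)
    (hconn : ∀ u ∈ V, ∀ v ∈ V, Relation.ReflTransGen Adj u v) :
    ∀ x ∈ V.biUnion id, ∀ y ∈ V.biUnion id, Relation.ReflTransGen (HRel V) x y := by
  have key : ∀ u v : Finset α, Relation.ReflTransGen Adj u v → u ∈ V → v ∈ V →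
      ∀ x ∈ u, ∀ y ∈ v, Relation.ReflTransGen (HRel V) x y := by
    intro u v huv
    induction huv with
    | refl => intro hu _ x hx y hy; exact Relation.ReflTransGen.single ⟨u, hu, hx, hy⟩
    | @tail v w h1 h2 ih =>
      intro hu hw x hx y hy
      have hvV : v ∈ V := (hAdjV _ _ h2).1
      -- v and w intersect
      have hvw : (v ∩ w).Nonempty := by
        have h3 := hinter _ _ h2
        have hv := hv2 _ hvV
        have hw2 := hv2 _ hw
        rw [← Finset.card_pos]
        have := Finset.card_union_add_card_inter v w
        omega
      obtain ⟨z, hz⟩ := hvw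
      rw [Finset.mem_inter] at hz
      exact (ih hu hvV x hx z hz.1).tail ⟨w, hw, hz.2, hy⟩
  intro x hx y hy
  obtain ⟨u, huV, hxu⟩ := Finset.mem_biUnion.1 hx
  obtain ⟨v, hvV, hyv⟩ := Finset.mem_biUnion.1 hy
  exact key u v (hconn u huV v hvV) huV hvV x hxu y hyv

lemma strong_tri_data {V : Finset (Finset α)} {Adj : Finset α → Finset α → Prop}
    (hAdjV : ∀ u v, Adj u v → u ∈ V ∧ v ∈ V)
    {t : Finset α} {z : α} (ht3 : t.card = 3) (hz : z ∈ t)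
    (hstrong : ∀ a b : Finset α, a ⊆ t → b ⊆ t → a.card = 2 → b.card = 2 → a ≠ b →
      Adj a b) :
    ∃ x y : α, z ≠ x ∧ z ≠ y ∧ x ≠ y ∧
      ({z,x} : Finset α) ∈ V ∧ ({x,y} : Finset α) ∈ V ∧ ({z,y} : Finset α) ∈ V ∧
      ({x,y} : Finset α) ≠ {z,x} ∧ ({z,y} : Finset α) ≠ {z,x} ∧
      ({z,x} : Finset α) ⊆ t ∧ ({x,y} : Finset α) ⊆ t ∧ ({z,y} : Finset α) ⊆ t := by
  have herase : (t.erase z).card = 2 := by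
    rw [Finset.card_erase_of_mem hz, ht3]
  obtain ⟨x, y, hxy, hexy⟩ := Finset.card_eq_two.1 herase
  have hzx : z ≠ x := by
    intro h; subst h
    have : z ∈ t.erase z := hexy ▸ (by simp)
    simp at this
  have hzy : z ≠ y := by
    intro h; subst h
    have : z ∈ t.erase z := hexy ▸ (by simp)
    simp at this
  have hxt : x ∈ t := Finset.mem_of_mem_erase (hexy ▸ (by simp : x ∈ ({x,y} : Finset α)))
  have hyt : y ∈ t := Finset.mem_of_mem_erase (hexy ▸ (by simp : y ∈ ({x,y} : Finset α)))
  have hzxs : ({z,x} : Finset α) ⊆ t := by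
    intro w hw; rcases Finset.mem_insert.1 hw with rfl | hw
    · exact hz
    · rw [Finset.mem_singleton] at hw; subst hw; exact hxt
  have hzys : ({z,y} : Finset α) ⊆ t := by
    intro w hw; rcases Finset.mem_insert.1 hw with rfl | hw
    · exact hz
    · rw [Finset.mem_singleton] at hw; subst hw; exact hyt
  have hxys : ({x,y} : Finset α) ⊆ t := by
    intro w hw; rcases Finset.mem_insert.1 hw with rfl | hw
    · exact hxt
    · rw [Finset.mem_singleton] at hw; subst hw; exact hyt
  have c1 : ({z,x} : Finset α).card = 2 := Finset.card_pair hzx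
  have c2 : ({x,y} : Finset α).card = 2 := Finset.card_pair hxy
  have c3 : ({z,y} : Finset α).card = 2 := Finset.card_pair hzy
  have ne1 : ({x,y} : Finset α) ≠ {z,x} := by
    intro h
    have : y ∈ ({z,x} : Finset α) := h ▸ (by simp)
    simp at this; rcases this with h | h
    · exact hzy h.symm
    · exact hxy h.symm
  have ne2 : ({z,y} : Finset α) ≠ {z,x} := by
    intro h
    have : y ∈ ({z,x} : Finset α) := h ▸ (by simp)
    simp at this; rcases this with h | h
    · exact hzy h.symm
    · exact hxy h.symm
  have ne3 : ({z,x} : Finset α) ≠ {z,y} := by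
    intro h
    have : x ∈ ({z,y} : Finset α) := h ▸ (by simp)
    simp at this; rcases this with h | h
    · exact hzx h.symm
    · exact hxy h
  have a1 : Adj {z,x} {x,y} := hstrong _ _ hzxs hxys c1 c2 (Ne.symm ne1)
  have a2 : Adj {z,x} {z,y} := hstrong _ _ hzxs hzys c1 c3 ne3
  exact ⟨x, y, hzx, hzy, hxy, (hAdjV _ _ a1).1, (hAdjV _ _ a1).2, (hAdjV _ _ a2).2,
    ne1, ne2, hzxs, hxys, hzys⟩


/-- graph-theoretic core: let `G = (V, Adj)` be a connected graph on
`n ≥ 4` vertices, each vertex a 2-element subset of a ground set, adjacent vertices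
having a 3-element union; edges representing the same 3-element set form a single edge
or a strong triangle; and each vertex is incident to edges representing at least 3
distinct 3-element sets. Then `|⋃V|` is strictly smaller than the number of distinct
3-element sets represented by the edges. -/
theorem stmt11 (V : Finset (Finset α)) (Adj : Finset α → Finset α → Prop)
    (hn : 4 ≤ V.card)
    (hv2 : ∀ v ∈ V, v.card = 2)
    (hAdjV : ∀ u v, Adj u v → u ∈ V ∧ v ∈ V)
    (hsymm : ∀ u v, Adj u v → Adj v u)
    (hirr : ∀ v, ¬ Adj v v)
    (hinter : ∀ u v, Adj u v → (u ∪ v).card = 3)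
    (hconn : ∀ u ∈ V, ∀ v ∈ V, Relation.ReflTransGen Adj u v)
    (htri : ∀ u v u' v', Adj u v → Adj u' v' → u ∪ v = u' ∪ v' →
      ({u, v} : Finset (Finset α)) = {u', v'} ∨
      (∀ a b : Finset α, a ⊆ u ∪ v → b ⊆ u ∪ v → a.card = 2 → b.card = 2 → a ≠ b →
        Adj a b))
    (hdeg : ∀ v ∈ V, 3 ≤ ((V.filter (fun u => Adj v u)).image (fun u => u ∪ v)).card) :
    (V.biUnion id).card <
      (((V ×ˢ V).filter (fun p => Adj p.1 p.2)).image (fun p => p.1 ∪ p.2)).card := by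
    classical
  set W := V.biUnion id with hWdef
  set T := ((V ×ˢ V).filter (fun p => Adj p.1 p.2)).image (fun p => p.1 ∪ p.2) with hTdef
  set Strong : Finset α → Prop := fun t => ∀ a b : Finset α, a ⊆ t → b ⊆ t →
    a.card = 2 → b.card = 2 → a ≠ b → Adj a b with hSdef
  set P := (V ×ˢ T).filter (fun p => ∃ u, Adj p.1 u ∧ u ∪ p.1 = p.2) with hPdef
  have hTmem : ∀ {u v : Finset α}, Adj u v → u ∪ v ∈ T := by
    intro u v h
    rw [hTdef]
    exact Finset.mem_image.2 ⟨(u, v),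
      Finset.mem_filter.2 ⟨Finset.mem_product.2 ⟨(hAdjV _ _ h).1, (hAdjV _ _ h).2⟩, h⟩, rfl⟩
  have hT3 : ∀ t ∈ T, t.card = 3 := by
    intro t ht
    rw [hTdef] at ht
    obtain ⟨p, hp, rfl⟩ := Finset.mem_image.1 ht
    exact hinter _ _ (Finset.mem_filter.1 hp).2
  have hPmem : ∀ p ∈ P, p.1 ∈ V ∧ p.2 ∈ T ∧ ∃ u, Adj p.1 u ∧ u ∪ p.1 = p.2 := by
    intro p hp
    rw [hPdef, Finset.mem_filter, Finset.mem_product] at hp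
    exact ⟨hp.1.1, hp.1.2, hp.2⟩
  -- lower bound on P.card
  have hcard1 : 3 * V.card ≤ P.card := by
    have hfib := Finset.card_eq_sum_card_fiberwise
      (f := Prod.fst) (s := P) (t := V) (fun p hp => (hPmem p hp).1)
    rw [hfib]
    have : ∀ v ∈ V, 3 ≤ (P.filter fun p => p.1 = v).card := by
      intro v hv
      refine le_trans (hdeg v hv) ?_
      apply Finset.card_le_card_of_injOn (fun t => (v, t))
      · intro t ht
        obtain ⟨u, hu, rfl⟩ := Finset.mem_image.1 ht
        rw [Finset.mem_filter] at hu
        have hadj : Adj v u := hu.2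
        rw [Finset.mem_coe, Finset.mem_filter]
        refine ⟨?_, rfl⟩
        rw [hPdef, Finset.mem_filter, Finset.mem_product]
        refine ⟨⟨hv, ?_⟩, ⟨u, hadj, rfl⟩⟩
        show u ∪ v ∈ T
        exact hTmem (hsymm _ _ hadj)
      · intro t1 _ t2 _ h
        simpa using congrArg Prod.snd h
    calc 3 * V.card = ∑ _v ∈ V, 3 := by rw [Finset.sum_const, smul_eq_mul, mul_comm]
      _ ≤ ∑ v ∈ V, (P.filter fun p => p.1 = v).card := Finset.sum_le_sum this
  -- upper bound on P.card
  have hcard2 : P.card ≤ 2 * T.card + (T.filter Strong).card := by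
    have hfib := Finset.card_eq_sum_card_fiberwise
      (f := Prod.snd) (s := P) (t := T) (fun p hp => (hPmem p hp).2.1)
    rw [hfib]
    have hbound : ∀ t ∈ T, (P.filter fun p => p.2 = t).card ≤
        2 + if Strong t then 1 else 0 := by
      intro t ht
      have ht' := ht
      rw [hTdef] at ht'
      obtain ⟨p0, hp0, hp0t⟩ := Finset.mem_image.1 ht'
      rw [Finset.mem_filter] at hp0
      have hadj0 : Adj p0.1 p0.2 := hp0.2
      have ht3 : t.card = 3 := hT3 t ht
      by_cases hs : Strong t
      · rw [if_pos hs]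
        have hle : (P.filter fun p => p.2 = t).card ≤ (t.powersetCard 2).card := by
          apply Finset.card_le_card_of_injOn (fun p => p.1)
          · intro p hp
            rw [Finset.mem_coe, Finset.mem_filter] at hp
            obtain ⟨hpP, hpt⟩ := hp
            obtain ⟨hp1V, _, u, hadj, huv⟩ := hPmem p hpP
            rw [Finset.mem_coe, Finset.mem_powersetCard]
            refine ⟨?_, hv2 _ hp1V⟩
            rw [← hpt, ← huv]
            exact Finset.subset_union_right
          · intro p hp q hq h
            rw [Finset.mem_coe, Finset.mem_filter] at hp hq
            exact Prod.ext h (hp.2.trans hq.2.symm)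
        rw [Finset.card_powersetCard, ht3] at hle
        norm_num at hle
        omega
      · rw [if_neg hs]
        have hsub : (P.filter fun p => p.2 = t) ⊆ {(p0.1, t), (p0.2, t)} := by
          intro p hp
          rw [Finset.mem_filter] at hp
          obtain ⟨hpP, hpt⟩ := hp
          obtain ⟨hp1V, _, u, hadj, huv⟩ := hPmem p hpP
          have hcomb : u ∪ p.1 = p0.1 ∪ p0.2 := by rw [huv, hpt, hp0t]
          rcases htri u p.1 p0.1 p0.2 (hsymm _ _ hadj) hadj0 hcomb with heq | hstr
          · have : p.1 ∈ ({p0.1, p0.2} : Finset (Finset α)) := heq ▸ (by simp)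
            rcases Finset.mem_insert.1 this with h | h
            · exact Finset.mem_insert.2 (Or.inl (Prod.ext h hpt))
            · rw [Finset.mem_singleton] at h
              exact Finset.mem_insert.2 (Or.inr (Finset.mem_singleton.2 (Prod.ext h hpt)))
          · exfalso
            apply hs
            rw [hSdef]
            intro a b hat hbt ha2 hb2 hab
            rw [← hpt, ← huv] at hat hbt
            exact hstr a b hat hbt ha2 hb2 hab
        calc (P.filter fun p => p.2 = t).card ≤ ({(p0.1, t), (p0.2, t)} : Finset _).card :=
              Finset.card_le_card hsub
          _ ≤ 2 := Finset.card_insert_le _ _ |>.trans (by simp)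
    calc ∑ t ∈ T, (P.filter fun p => p.2 = t).card
        ≤ ∑ t ∈ T, (2 + if Strong t then 1 else 0) := Finset.sum_le_sum hbound
      _ = 2 * T.card + (T.filter Strong).card := by
          rw [Finset.sum_add_distrib, Finset.sum_const, smul_eq_mul, mul_comm,
            ← Finset.card_filter]
  have hineq : 3 * V.card ≤ 2 * T.card + (T.filter Strong).card := hcard1.trans hcard2
  have ht3le : (T.filter Strong).card ≤ T.card := Finset.card_filter_le _ _
  -- connectivity of the element graph
  have hHconn : ∀ x ∈ W, ∀ y ∈ W, Relation.ReflTransGen (HRel V) x y :=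
    elem_conn hv2 hAdjV hinter hconn
  have hm1 : W.card ≤ V.card + 1 := card_biUnion_le V hv2 hHconn
  -- case analysis on number of strong triples
  rcases Nat.lt_or_ge (T.filter Strong).card 1 with h0 | h1
  · -- no strong triples
    omega
  rcases Nat.lt_or_ge (T.filter Strong).card 2 with h1' | h2
  · -- exactly one strong triple: m ≤ n
    obtain ⟨t, ht⟩ := Finset.card_pos.1 h1
    rw [Finset.mem_filter] at ht
    obtain ⟨htT, hts⟩ := ht
    have ht3 : t.card = 3 := hT3 t htT
    obtain ⟨z, hz⟩ := Finset.card_pos.1 (by omega : 0 < t.card)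
    obtain ⟨x, y, hzx, hzy, hxy, hV1, hV2, hV3, hne1, hne2, hsub1, hsub2, hsub3⟩ :=
      strong_tri_data hAdjV ht3 hz hts
    obtain ⟨hbu, hconn'⟩ := erase_tri hV1 hV2 hV3 hne1 hne2 hHconn
    have hm2 := card_biUnion_le (V.erase {z,x})
      (fun e he => hv2 e (Finset.mem_of_mem_erase he)) hconn'
    rw [hbu, ← hWdef] at hm2
    rw [Finset.card_erase_of_mem hV1] at hm2
    have hVpos : 1 ≤ V.card := by omega
    omega
  · -- at least two strong triples: m ≤ n - 1
    obtain ⟨t1, ht1, t2, ht2, ht12⟩ := Finset.one_lt_card.1 h2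
    rw [Finset.mem_filter] at ht1 ht2
    have ht13 : t1.card = 3 := hT3 t1 ht1.1
    have ht23 : t2.card = 3 := hT3 t2 ht2.1
    -- pick z1 ∈ t1 \ t2 and z2 ∈ t2 \ t1
    have hns1 : ¬ t1 ⊆ t2 := fun h => ht12 (Finset.eq_of_subset_of_card_le h (by omega))
    have hns2 : ¬ t2 ⊆ t1 :=
      fun h => ht12 (Finset.eq_of_subset_of_card_le h (by omega)).symm
    obtain ⟨z1, hz1t1, hz1t2⟩ := Finset.not_subset.1 hns1
    obtain ⟨z2, hz2t2, hz2t1⟩ := Finset.not_subset.1 hns2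
    obtain ⟨x1, y1, _, _, _, hV1, hV2, hV3, hne1, hne2, hsubA1, hsubA2, hsubA3⟩ :=
      strong_tri_data hAdjV ht13 hz1t1 ht1.2
    obtain ⟨x2, y2, _, _, _, hW1, hW2, hW3, hme1, hme2, hsubB1, hsubB2, hsubB3⟩ :=
      strong_tri_data hAdjV ht23 hz2t2 ht2.2
    obtain ⟨hbu1, hconn1⟩ := erase_tri hV1 hV2 hV3 hne1 hne2 hHconn
    set E1 := V.erase ({z1, x1} : Finset α) with hE1def
    -- edges of the second triangle survive in E1
    have hsurv : ∀ g : Finset α, g ∈ V → g ⊆ t2 → g ∈ E1 := by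
      intro g hgV hgt2
      rw [hE1def, Finset.mem_erase]
      refine ⟨?_, hgV⟩
      intro h
      subst h
      exact hz1t2 (hgt2 (by simp))
    have hW1' : ({z2, x2} : Finset α) ∈ E1 := hsurv _ hW1 hsubB1
    have hW2' : ({x2, y2} : Finset α) ∈ E1 := hsurv _ hW2 hsubB2
    have hW3' : ({z2, y2} : Finset α) ∈ E1 := hsurv _ hW3 hsubB3
    obtain ⟨hbu2, hconn2⟩ := erase_tri hW1' hW2' hW3' hme1 hme2 hconn1
    have hm2 := card_biUnion_le (E1.erase ({z2, x2} : Finset α))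
      (fun e he => hv2 e (Finset.mem_of_mem_erase (Finset.mem_of_mem_erase he))) hconn2
    rw [hbu2, hbu1, ← hWdef] at hm2
    rw [Finset.card_erase_of_mem hW1', hE1def, Finset.card_erase_of_mem hV1] at hm2
    omega
end

section
/- Let A ⊆ N be R-structures and C the universe of a clique with witnesses wit(C) = {x,y}, such that |(C ∪ {x,y}) ∩ A| ≥ 2. Then for any D ⊆ C, d₀({x,y} ∪ D / A) ≤ 0. If moreover A ≤ N (A is self-sufficient in N), then A ∪ {x,y} ∪ D ≤ N. -/
variable {α : Type*} [DecidableEq α]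

open scoped Classical in
lemma rCount_eq_card (R : α → α → α → Prop) (X : Finset α) :
    rCount R X = (X.powerset.filter
      (fun s => ∃ a b c : α, a ≠ b ∧ a ≠ c ∧ b ≠ c ∧ s = {a, b, c} ∧ R a b c)).card := by
  rw [rCount, ← Set.ncard_coe_finset]
  congr 1
  ext s
  simp [Finset.mem_filter, Finset.mem_powerset]

open scoped Classical in
lemma rCount_add_le (R : α → α → α → Prop) (A A' : Finset α) (hAA : A ⊆ A')
    (x y : α) (hxA' : x ∈ A') (hyA' : y ∈ A') (hxy : x ≠ y) (W : Finset α)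
    (hW : ∀ c ∈ W, c ∈ A' ∧ c ≠ x ∧ c ≠ y ∧ R c x y)
    (hnot : ∀ c ∈ W, ¬ (({c, x, y} : Finset α) ⊆ A)) :
    rCount R A + W.card ≤ rCount R A' := by
  rw [rCount_eq_card, rCount_eq_card]
  set P : Finset α → Prop :=
    fun s => ∃ a b c : α, a ≠ b ∧ a ≠ c ∧ b ≠ c ∧ s = {a, b, c} ∧ R a b c with hP
  set TA := A.powerset.filter P with hTA
  set TA' := A'.powerset.filter P with hTA'
  set E : Finset (Finset α) := W.image (fun c => ({c, x, y} : Finset α)) with hE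
  have hEcard : E.card = W.card := by
    apply Finset.card_image_of_injOn
    intro c hc c' hc' h
    have h' : ({c, x, y} : Finset α) = {c', x, y} := h
    have h1 : c ∈ ({c', x, y} : Finset α) := by
      rw [← h']; simp
    simp only [Finset.mem_insert, Finset.mem_singleton] at h1
    rcases h1 with h1 | h1 | h1
    · exact h1
    · exact absurd h1 (hW c hc).2.1
    · exact absurd h1 (hW c hc).2.2.1
  have hdisj : Disjoint TA E := by
    rw [Finset.disjoint_right]
    intro s hs hsTA
    simp only [hE, Finset.mem_image] at hs
    obtain ⟨c, hc, rfl⟩ := hs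
    simp only [hTA, Finset.mem_filter, Finset.mem_powerset] at hsTA
    exact hnot c hc hsTA.1
  have hsub : TA ∪ E ⊆ TA' := by
    intro s hs
    simp only [Finset.mem_union] at hs
    rcases hs with hs | hs
    · simp only [hTA, hTA', Finset.mem_filter, Finset.mem_powerset] at *
      exact ⟨hs.1.trans hAA, hs.2⟩
    · simp only [hE, Finset.mem_image] at hs
      obtain ⟨c, hc, rfl⟩ := hs
      obtain ⟨hcA', hcx, hcy, hRc⟩ := hW c hc
      simp only [hTA', Finset.mem_filter, Finset.mem_powerset]
      constructor
      · intro a ha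
        simp only [Finset.mem_insert, Finset.mem_singleton] at ha
        rcases ha with rfl | rfl | rfl <;> assumption
      · exact ⟨c, x, y, hcx, hcy, hxy, rfl, hRc⟩
  calc TA.card + W.card = TA.card + E.card := by rw [hEcard]
    _ = (TA ∪ E).card := (Finset.card_union_of_disjoint hdisj).symm
    _ ≤ TA'.card := Finset.card_le_card hsub

/-- let `A ⊆ N` and let `C ⊆ N` be the universe of a clique witnessed by
`{x,y} ⊆ N`, with `|(C ∪ {x,y}) ∩ A| ≥ 2`. Then for every `D ⊆ C`,
`d₀({x,y} ∪ D / A) ≤ 0`; moreover if `A ≤ N` then `A ∪ {x,y} ∪ D ≤ N`. -/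
theorem stmt14 (R : α → α → α → Prop) (hR : SymIrr R)
    (N : Set α) (A : Finset α) (hAN : ↑A ⊆ N)
    (C : Finset α) (hCN : ↑C ⊆ N)
    (x y : α) (hxN : x ∈ N) (hyN : y ∈ N)
    (hxy : x ≠ y) (hx : x ∉ C) (hy : y ∉ C)
    (hw : ∀ c ∈ C, R c x y)
    (hint : 2 ≤ ((C ∪ {x, y}) ∩ A).card)
    (D : Finset α) (hD : D ⊆ C) :
    d0 R (A ∪ {x, y} ∪ D) - d0 R A ≤ 0 ∧
    ((∀ Y : Finset α, ↑Y ⊆ N → d0 R A ≤ d0 R (Y ∪ A)) →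
      ∀ Y : Finset α, ↑Y ⊆ N →
        d0 R (A ∪ {x, y} ∪ D) ≤ d0 R (Y ∪ (A ∪ {x, y} ∪ D))) := by
  set A' : Finset α := A ∪ {x, y} ∪ D with hA'
  have hAA' : A ⊆ A' := by
    intro a ha; simp [hA', Finset.mem_union, ha]
  have hxA' : x ∈ A' := by simp [hA', Finset.mem_union]
  have hyA' : y ∈ A' := by simp [hA', Finset.mem_union]
  have hcard : (A' \ A).card + A.card = A'.card :=
    Finset.card_sdiff_add_card_eq_card hAA'
  have hpart1 : d0 R A' - d0 R A ≤ 0 := by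
    by_cases hxyA : x ∈ A ∧ y ∈ A
    · -- both witnesses already in A
      have hkey : rCount R A + (D \ A).card ≤ rCount R A' := by
        apply rCount_add_le R A A' hAA' x y hxA' hyA' hxy
        · intro c hc
          rw [Finset.mem_sdiff] at hc
          have hcC : c ∈ C := hD hc.1
          exact ⟨by simp [hA', Finset.mem_union, hc.1],
            fun h => hx (h ▸ hcC), fun h => hy (h ▸ hcC), hw c hcC⟩
        · intro c hc hsub
          rw [Finset.mem_sdiff] at hc
          exact hc.2 (hsub (by simp))
      have hm : A' \ A ⊆ D \ A := by
        intro a ha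
        rw [Finset.mem_sdiff] at ha ⊢
        refine ⟨?_, ha.2⟩
        rcases Finset.mem_union.mp ha.1 with h | h
        · rcases Finset.mem_union.mp h with h | h
          · exact absurd h ha.2
          · simp only [Finset.mem_insert, Finset.mem_singleton] at h
            rcases h with rfl | rfl
            · exact absurd hxyA.1 ha.2
            · exact absurd hxyA.2 ha.2
        · exact h
      have hm' : (A' \ A).card ≤ (D \ A).card := Finset.card_le_card hm
      simp only [d0]
      omega
    · -- at least one of x, y is new
      have hW : ∀ c ∈ D ∪ (A ∩ C), c ∈ A' ∧ c ≠ x ∧ c ≠ y ∧ R c x y := by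
        intro c hc
        have hcC : c ∈ C := by
          rcases Finset.mem_union.mp hc with h | h
          · exact hD h
          · exact (Finset.mem_inter.mp h).2
        have hcA' : c ∈ A' := by
          rcases Finset.mem_union.mp hc with h | h
          · simp [hA', Finset.mem_union, h]
          · exact hAA' (Finset.mem_inter.mp h).1
        exact ⟨hcA', fun h => hx (h ▸ hcC), fun h => hy (h ▸ hcC), hw c hcC⟩
      have hkey : rCount R A + (D ∪ (A ∩ C)).card ≤ rCount R A' := by
        apply rCount_add_le R A A' hAA' x y hxA' hyA' hxy _ hW
        intro c hc hsub
        exact hxyA ⟨hsub (by simp), hsub (by simp)⟩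
      have h1 : (D ∪ (A ∩ C)).card = (D \ A).card + (A ∩ C).card := by
        have heq : D ∪ (A ∩ C) = (D \ A) ∪ (A ∩ C) := by
          ext a
          have hDa : a ∈ D → a ∈ C := fun h => hD h
          simp only [Finset.mem_union, Finset.mem_sdiff, Finset.mem_inter]
          tauto
        rw [heq]
        apply Finset.card_union_of_disjoint
        rw [Finset.disjoint_left]
        intro a ha hb
        exact (Finset.mem_sdiff.mp ha).2 (Finset.mem_inter.mp hb).1
      have h2 : A' \ A ⊆ (({x, y} : Finset α) \ A) ∪ (D \ A) := by
        intro a ha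
        rw [Finset.mem_sdiff] at ha
        simp only [Finset.mem_union, Finset.mem_sdiff]
        rcases Finset.mem_union.mp ha.1 with h | h
        · rcases Finset.mem_union.mp h with h | h
          · exact absurd h ha.2
          · exact Or.inl ⟨h, ha.2⟩
        · exact Or.inr ⟨h, ha.2⟩
      have h5 : (A' \ A).card ≤ (({x, y} : Finset α) \ A).card + (D \ A).card :=
        le_trans (Finset.card_le_card h2) (Finset.card_union_le _ _)
      have h3 : (({x, y} : Finset α) \ A).card + (({x, y} : Finset α) ∩ A).card = 2 := by
        rw [Finset.card_sdiff_add_card_inter]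
        simp [hxy]
      have h4 : 2 ≤ (C ∩ A).card + (({x, y} : Finset α) ∩ A).card := by
        have heq : (C ∪ {x, y}) ∩ A = (C ∩ A) ∪ (({x, y} : Finset α) ∩ A) :=
          Finset.union_inter_distrib_right _ _ _
        have hdisj : Disjoint (C ∩ A) (({x, y} : Finset α) ∩ A) := by
          rw [Finset.disjoint_left]
          intro a ha hb
          have haC : a ∈ C := (Finset.mem_inter.mp ha).1
          have : a ∈ ({x, y} : Finset α) := (Finset.mem_inter.mp hb).1
          simp only [Finset.mem_insert, Finset.mem_singleton] at this
          rcases this with rfl | rfl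
          · exact hx haC
          · exact hy haC
        rw [heq, Finset.card_union_of_disjoint hdisj] at hint
        exact hint
      have h6 : (A ∩ C).card = (C ∩ A).card := by rw [Finset.inter_comm]
      simp only [d0]
      omega
  refine ⟨hpart1, ?_⟩
  intro hss Y hYN
  have hY'N : ↑(Y ∪ {x, y} ∪ D) ⊆ N := by
    intro a ha
    simp only [Finset.coe_union, Set.mem_union, Finset.coe_insert, Finset.coe_singleton,
      Set.mem_insert_iff, Set.mem_singleton_iff] at ha
    rcases ha with (ha | rfl | rfl) | ha
    · exact hYN ha
    · exact hxN
    · exact hyN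
    · exact hCN (hD ha)
  have h := hss (Y ∪ {x, y} ∪ D) hY'N
  have heq : (Y ∪ {x, y} ∪ D) ∪ A = Y ∪ A' := by
    ext a
    simp only [hA', Finset.mem_union]
    tauto
  rw [heq] at h
  linarith
end

section
/- For A ⊆ N S-structures and b ∈ N \ A, the relative predimension satisfies d₀ₛ(b/A) = 1 − Clq(b, A ∪ {b}), where Clq(b, A ∪ {b}) counts (with multiplicity) the maximal cliques of A ∪ {b} containing b. -/
variable {α : Type*} [DecidableEq α] {β : Type*} [DecidableEq β]

/-- `Clq(b, X)`: the number, counted with multiplicity, of maximal cliques of the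
induced structure on `X` containing `b` (i.e. the sets `C ∩ X` of size `≥ 3`
containing `b`, for ambient cliques `C`). -/
noncomputable def Clq (N : SStruct α) (b : α) (X : Finset α) : ℕ :=
  ∑ᶠ C ∈ {C : Finset α | b ∈ C ∧ 3 ≤ (C ∩ X).card}, N.pm C

/-- for `A ⊆ N` and `b ∈ N \ A`,
`d₀ₛ(b/A) = 1 - Clq(b, A ∪ {b})`. -/
theorem stmt15 (N : SStruct α) (A : Finset α) (b : α)
    (hA : ↑A ⊆ N.carrier) (hb : b ∈ N.carrier) (hbA : b ∉ A) :
    d0s N (insert b A) - d0s N A = 1 - (Clq N b (insert b A) : ℤ) := by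
  classical
  set X := insert b A with hX
  set T := (N.finite_meets X).toFinset with hT
  have hmemT : ∀ C : Finset α, C ∈ T ↔ N.pm C ≠ 0 ∧ 3 ≤ (C ∩ X).card := by
    intro C; simp [hT]
  have hsub : ∀ C : Finset α, C ∩ A ⊆ C ∩ X :=
    fun C => Finset.inter_subset_inter_left (Finset.subset_insert b A)
  have h1 : ∑ᶠ C : Finset α, (N.pm C : ℤ) * cardStar (C ∩ X)
      = ∑ C ∈ T, (N.pm C : ℤ) * cardStar (C ∩ X) := by
    apply finsum_eq_sum_of_support_subset
    intro C hC
    simp only [Function.mem_support, ne_eq, mul_eq_zero, not_or] at hC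
    rw [Finset.mem_coe, hmemT]
    refine ⟨fun h => hC.1 (by simp [h]), ?_⟩
    by_contra h
    exact hC.2 (by simp [cardStar]; omega)
  have h2 : ∑ᶠ C : Finset α, (N.pm C : ℤ) * cardStar (C ∩ A)
      = ∑ C ∈ T, (N.pm C : ℤ) * cardStar (C ∩ A) := by
    apply finsum_eq_sum_of_support_subset
    intro C hC
    simp only [Function.mem_support, ne_eq, mul_eq_zero, not_or] at hC
    rw [Finset.mem_coe, hmemT]
    refine ⟨fun h => hC.1 (by simp [h]), ?_⟩
    have h3 : 3 ≤ (C ∩ A).card := by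
      by_contra h
      exact hC.2 (by simp [cardStar]; omega)
    exact le_trans h3 (Finset.card_le_card (hsub C))
  have h3 : Clq N b X = ∑ C ∈ T, (if b ∈ C ∧ 3 ≤ (C ∩ X).card then N.pm C else 0) := by
    rw [Clq, finsum_mem_def]
    rw [finsum_eq_sum_of_support_subset]
    · apply Finset.sum_congr rfl
      intro C _
      simp [Set.indicator_apply]
    · intro C hC
      simp only [Function.mem_support, Set.indicator_apply, ne_eq] at hC
      rw [Finset.mem_coe, hmemT]
      by_cases hCs : b ∈ C ∧ 3 ≤ (C ∩ X).card
      · simp [Set.mem_setOf_eq, hCs] at hC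
        exact ⟨hC, hCs.2⟩
      · simp [Set.mem_setOf_eq, hCs] at hC
  have hcard : (X.card : ℤ) = A.card + 1 := by
    rw [hX, Finset.card_insert_of_notMem hbA]; push_cast; ring
  rw [d0s, d0s, h1, h2, h3, hcard]
  have key : ∀ C ∈ T, (N.pm C : ℤ) * cardStar (C ∩ X) - (N.pm C : ℤ) * cardStar (C ∩ A)
      = (if b ∈ C ∧ 3 ≤ (C ∩ X).card then (N.pm C : ℤ) else 0) := by
    intro C hC
    rw [hmemT] at hC
    by_cases hbC : b ∈ C
    · have hins : C ∩ X = insert b (C ∩ A) := by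
        rw [hX, Finset.inter_insert_of_mem hbC]
      have hbCA : b ∉ C ∩ A := fun h => hbA (Finset.mem_of_mem_inter_right h)
      have hcardX : (C ∩ X).card = (C ∩ A).card + 1 := by
        rw [hins, Finset.card_insert_of_notMem hbCA]
      have h2' : 2 ≤ (C ∩ A).card := by omega
      simp only [hbC, true_and, hC.2, if_true]
      rw [cardStar, cardStar, hcardX]
      push_cast
      have : (2:ℤ) ≤ ((C ∩ A).card : ℤ) := by exact_mod_cast h2'
      rw [max_eq_right (by omega), max_eq_right (by omega)]
      ring
    · have : C ∩ X = C ∩ A := by rw [hX, Finset.inter_insert_of_notMem hbC]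
      simp [this, hbC]
  have hS : (∑ C ∈ T, (N.pm C : ℤ) * cardStar (C ∩ X)) - ∑ C ∈ T, (N.pm C : ℤ) * cardStar (C ∩ A)
      = ∑ C ∈ T, (if b ∈ C ∧ 3 ≤ (C ∩ X).card then (N.pm C : ℤ) else 0) := by
    rw [← Finset.sum_sub_distrib]
    exact Finset.sum_congr rfl key
  push_cast
  linarith [hS]
end

section
/- For every E ∈ 𝒞ₛ (finite S-structure with ∅ ≤ₛ E) there exists an injective function f: C(E) → [E]² assigning to each maximal clique C a 2-element subset f(C) ⊆ C, with all assigned pairs distinct. -/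
variable {α : Type*} [DecidableEq α] {β : Type*} [DecidableEq β]

/-- `E ∈ 𝒞ₛ`: a finite S-structure all of whose substructures have nonnegative
S-predimension (`∅ ≤ₛ E`). -/
def InCs (E : SStruct α) : Prop :=
  E.carrier.Finite ∧ ∀ X : Finset α, ↑X ⊆ E.carrier → 0 ≤ d0s E X

/-- for every `E ∈ 𝒞ₛ` there is an injective assignment of a 2-element
subset `f C ⊆ C` to each maximal clique `C` of `E`. -/
theorem stmt17 (E : SStruct α) (hE : InCs E) :
    ∃ f : Finset α → Finset α,
      Set.InjOn f {C : Finset α | E.pm C ≠ 0} ∧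
      ∀ C : Finset α, E.pm C ≠ 0 → f C ⊆ C ∧ (f C).card = 2 := by
  classical
  set ι := {C : Finset α // E.pm C ≠ 0} with hι
  set t : ι → Finset (Finset α) := fun C => (C : Finset α).powersetCard 2 with ht
  have hall : ∀ s : Finset ι, s.card ≤ (s.biUnion t).card := by
    intro s
    set X : Finset α := s.biUnion (fun C => (C : Finset α)) with hX
    set P : Finset (Finset α) := s.biUnion t with hP
    have hsubX : ∀ C ∈ s, (C : ι).1 ⊆ X := fun C hC =>
      Finset.subset_biUnion_of_mem _ hC
    -- Step A : s.card ≤ X.card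
    have hXcarrier : ↑X ⊆ E.carrier := by
      intro x hx
      simp only [hX, Finset.coe_biUnion, Finset.mem_coe, Set.mem_iUnion] at hx
      obtain ⟨C, hC, hxC⟩ := hx
      exact (E.pm_supp C.1 C.2).1 hxC
    have hd := hE.2 X hXcarrier
    have hM := E.finite_meets X
    have hsupp : (Function.support fun C : Finset α =>
        (E.pm C : ℤ) * cardStar (C ∩ X)) ⊆ ↑hM.toFinset := by
      intro C hC
      simp only [Function.mem_support, ne_eq, mul_eq_zero, not_or, cardStar] at hC
      simp only [Set.Finite.coe_toFinset, Set.mem_setOf_eq]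
      refine ⟨fun h => hC.1 (by exact_mod_cast h), ?_⟩
      rcases hC with ⟨-, h2⟩
      by_contra h
      exact h2 (by omega)
    have hsum : (∑ᶠ C : Finset α, (E.pm C : ℤ) * cardStar (C ∩ X))
        = ∑ C ∈ hM.toFinset, (E.pm C : ℤ) * cardStar (C ∩ X) :=
      finsum_eq_sum_of_support_subset _ hsupp
    have hsimg : s.image Subtype.val ⊆ hM.toFinset := by
      intro C hC
      simp only [Finset.mem_image] at hC
      obtain ⟨D, hD, rfl⟩ := hC
      have hsub := hsubX D hD
      have h3 := (E.pm_supp D.1 D.2).2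
      simp only [Set.Finite.mem_toFinset, Set.mem_setOf_eq]
      exact ⟨D.2, by rwa [Finset.inter_eq_left.mpr hsub]⟩
    have hcard_le : (s.card : ℤ) ≤ ∑ C ∈ hM.toFinset, (E.pm C : ℤ) * cardStar (C ∩ X) := by
      have h1 : ∀ C ∈ s.image Subtype.val, (1 : ℤ) ≤ (E.pm C : ℤ) * cardStar (C ∩ X) := by
        intro C hC
        simp only [Finset.mem_image] at hC
        obtain ⟨D, hD, rfl⟩ := hC
        have hsub := hsubX D hD
        have h3 := (E.pm_supp D.1 D.2).2
        rw [Finset.inter_eq_left.mpr hsub]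
        have hpm : (1 : ℤ) ≤ (E.pm D.1 : ℤ) := by
          have := D.2; omega
        have hcs : (1 : ℤ) ≤ cardStar D.1 := by
          simp only [cardStar]; omega
        nlinarith
      calc (s.card : ℤ) = ((s.image Subtype.val).card : ℤ) := by
            rw [Finset.card_image_of_injective _ Subtype.val_injective]
        _ = ∑ C ∈ s.image Subtype.val, (1 : ℤ) := by simp
        _ ≤ ∑ C ∈ s.image Subtype.val, (E.pm C : ℤ) * cardStar (C ∩ X) :=
            Finset.sum_le_sum h1
        _ ≤ ∑ C ∈ hM.toFinset, (E.pm C : ℤ) * cardStar (C ∩ X) := by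
            apply Finset.sum_le_sum_of_subset_of_nonneg hsimg
            intro C _ _
            have : (0 : ℤ) ≤ cardStar (C ∩ X) := le_max_left _ _
            positivity
    have hA : s.card ≤ X.card := by
      unfold d0s at hd
      rw [hsum] at hd
      have : (s.card : ℤ) ≤ (X.card : ℤ) := le_trans hcard_le (by linarith)
      exact_mod_cast this
    -- Step B : X.card ≤ P.card
    have hPsub : ∀ p ∈ P, p ⊆ X ∧ p.card = 2 := by
      intro p hp
      simp only [hP, ht, Finset.mem_biUnion, Finset.mem_powersetCard] at hp
      obtain ⟨C, hC, hpC, hp2⟩ := hp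
      exact ⟨hpC.trans (hsubX C hC), hp2⟩
    have hdeg : ∀ v ∈ X, 2 ≤ (P.filter (fun p => v ∈ p)).card := by
      intro v hv
      simp only [hX, Finset.mem_biUnion] at hv
      obtain ⟨C, hC, hvC⟩ := hv
      have h3 := (E.pm_supp C.1 C.2).2
      have herase : 2 ≤ (C.1.erase v).card := by
        rw [Finset.card_erase_of_mem hvC]; omega
      obtain ⟨w₁, hw₁, w₂, hw₂, hww⟩ := Finset.one_lt_card.mp (by omega : 1 < (C.1.erase v).card)
      have hw₁v : w₁ ≠ v := Finset.ne_of_mem_erase hw₁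
      have hw₂v : w₂ ≠ v := Finset.ne_of_mem_erase hw₂
      have hmem : ∀ w, w ∈ C.1.erase v → ({v, w} : Finset α) ∈ P.filter (fun p => v ∈ p) := by
        intro w hw
        have hwv : w ≠ v := Finset.ne_of_mem_erase hw
        simp only [Finset.mem_filter, hP, ht, Finset.mem_biUnion]
        refine ⟨⟨C, hC, ?_⟩, by simp⟩
        rw [Finset.mem_powersetCard]
        constructor
        · intro x hx
          simp only [Finset.mem_insert, Finset.mem_singleton] at hx
          rcases hx with rfl | rfl
          · exact hvC
          · exact Finset.mem_of_mem_erase hw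
        · rw [Finset.card_insert_of_notMem (by simp [hwv.symm]), Finset.card_singleton]
      have hpair : ({({v, w₁} : Finset α), ({v, w₂} : Finset α)} : Finset (Finset α)) ⊆
          P.filter (fun p => v ∈ p) := by
        intro p hp
        simp only [Finset.mem_insert, Finset.mem_singleton] at hp
        rcases hp with rfl | rfl
        · exact hmem w₁ hw₁
        · exact hmem w₂ hw₂
      have hne : ({v, w₁} : Finset α) ≠ ({v, w₂} : Finset α) := by
        intro h
        have : w₁ ∈ ({v, w₂} : Finset α) := h ▸ (by simp : w₁ ∈ ({v, w₁} : Finset α))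
        simp only [Finset.mem_insert, Finset.mem_singleton] at this
        tauto
      calc 2 = ({({v, w₁} : Finset α), ({v, w₂} : Finset α)} : Finset (Finset α)).card := by
            rw [Finset.card_insert_of_notMem (by simp [hne]), Finset.card_singleton]
        _ ≤ _ := Finset.card_le_card hpair
    have hdouble : ∑ v ∈ X, (P.filter (fun p => v ∈ p)).card
        = ∑ p ∈ P, (X.filter (fun v => v ∈ p)).card := by
      simp only [Finset.card_filter]
      rw [Finset.sum_comm]
    have hB : X.card ≤ P.card := by
      have h1 : 2 * X.card ≤ ∑ v ∈ X, (P.filter (fun p => v ∈ p)).card := by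
        calc 2 * X.card = ∑ _v ∈ X, 2 := by rw [Finset.sum_const, smul_eq_mul, mul_comm]
          _ ≤ _ := Finset.sum_le_sum hdeg
      have h2 : ∑ p ∈ P, (X.filter (fun v => v ∈ p)).card = 2 * P.card := by
        rw [Finset.sum_congr rfl (fun p hp => ?_), Finset.sum_const, smul_eq_mul, mul_comm]
        obtain ⟨hpX, hp2⟩ := hPsub p hp
        rw [Finset.filter_mem_eq_inter, Finset.inter_eq_right.mpr hpX, hp2]
      omega
    exact le_trans hA hB
  obtain ⟨f₀, hf₀inj, hf₀mem⟩ := (Finset.all_card_le_biUnion_card_iff_exists_injective t).mp hall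
  refine ⟨fun C => if h : E.pm C ≠ 0 then f₀ ⟨C, h⟩ else ∅, ?_, ?_⟩
  · intro C hC D hD h
    simp only [Set.mem_setOf_eq] at hC hD
    simp only [dif_pos hC, dif_pos hD] at h
    exact congrArg Subtype.val (hf₀inj h)
  · intro C hC
    simp only [dif_pos hC]
    have := hf₀mem ⟨C, hC⟩
    simp only [ht, Finset.mem_powersetCard] at this
    exact this
end

section
/- In a pregeometry with dimension d arising from a submodular predimension: if A is d-closed in B (every b ∈ B depending on A lies in A), then d(A,B) = d₀(A); that is, A is self-sufficient in B and its dimension equals its predimension. -/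
variable {α : Type*} [DecidableEq α]

/-- let `d₀` be a submodular predimension function on finite subsets of
the ambient set (`d₀(∅) = 0`, `d₀` of singletons at most 1, submodularity), and let
`d` be the associated dimension (`d(X)` is the minimum of `d₀` over finite supersets
of `X`). If `A` is `d`-closed (every point depending on `A` lies in `A`), then
`d(A) = d₀(A)`: `A` is self-sufficient and its dimension equals its predimension. -/
theorem stmt19 (d0 : Finset α → ℤ)
    (h0 : d0 ∅ = 0)
    (h1 : ∀ a : α, d0 {a} ≤ 1)
    (hsub : ∀ X Y : Finset α, d0 (X ∪ Y) ≤ d0 X + d0 Y - d0 (X ∩ Y))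
    (d : Finset α → ℤ)
    (hd : ∀ X : Finset α,
      IsLeast {n : ℤ | ∃ D : Finset α, X ⊆ D ∧ n = d0 D} (d X))
    (A : Finset α)
    (hclosed : ∀ b : α, d (insert b A) = d A → b ∈ A) :
    d A = d0 A ∧ ∀ D : Finset α, A ⊆ D → d0 A ≤ d0 D := by
  obtain ⟨⟨D, hAD, hdA⟩, hlb⟩ := hd A
  -- every element of D depends on A, hence lies in A
  have hDA : D ⊆ A := by
    intro b hb
    apply hclosed
    have h1' : d (insert b A) ≤ d A := by
      rw [hdA]
      exact (hd (insert b A)).2 ⟨D, Finset.insert_subset hb hAD, rfl⟩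
    have h2' : d A ≤ d (insert b A) := by
      obtain ⟨E, hE, hEeq⟩ := (hd (insert b A)).1
      exact hlb ⟨E, (Finset.subset_insert b A).trans hE, hEeq⟩
    omega
  have hDeq : D = A := Finset.Subset.antisymm hDA hAD
  subst hDeq
  refine ⟨hdA, fun E hE => ?_⟩
  rw [← hdA]
  exact hlb ⟨E, hE, rfl⟩
end
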